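/- arXiv:2002.01108 — 5 statements merged into one kernel-verified Lean document; each statement's English description precedes it below -/
import Mathlib

section
/- For every ε ∈ (0,1], the matrix Z_ε is invertible. -/
open Matrix

section Aux

variable {n : Type*} [Fintype n] [DecidableEq n]

lemma aux_posDef_smul {c : ℝ} {A : Matrix n n ℝ} (hc : 0 < c) (hA : A.PosDef) :
    (c • A).PosDef := by
  refine posDef_iff_dotProduct_mulVec.2 ⟨?_, fun x hx => ?_⟩
  · unfold Matrix.IsHermitian
    rw [conjTranspose_smul, hA.1.eq, star_trivial]
  · rw [smul_mulVec, dotProduct_smul, smul_eq_mul]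
    exact mul_pos hc (hA.dotProduct_mulVec_pos hx)

lemma aux_posDef_conj {A B : Matrix n n ℝ} (hA : A.PosDef) (hB : IsUnit B) :
    (Bᴴ * A * B).PosDef := by
  refine posDef_iff_dotProduct_mulVec.2 ⟨isHermitian_conjTranspose_mul_mul B hA.1, fun x hx => ?_⟩
  have hBx : B *ᵥ x ≠ 0 := by
    intro h
    exact hx (Matrix.mulVec_injective_iff_isUnit.2 hB (by simpa using h))
  simpa only [star_mulVec, dotProduct_mulVec, vecMul_vecMul] using hA.dotProduct_mulVec_pos hBx

/-- If `S` and `1 - S` are positive definite and `0 < ε ≤ 1`, `N ≠ 0`,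
then `1 - ε • S ^ N` is a unit. -/
lemma aux_unit_one_sub_smul_pow {S : Matrix n n ℝ} (hS : S.PosDef)
    (h1S : ((1 : Matrix n n ℝ) - S).PosDef) {ε : ℝ} (hε0 : 0 < ε) (hε1 : ε ≤ 1)
    {N : ℕ} (hN : N ≠ 0) : IsUnit ((1 : Matrix n n ℝ) - ε • S ^ N) := by
  have hH : S.IsHermitian := hS.1
  set U : Matrix n n ℝ := (hH.eigenvectorUnitary : Matrix n n ℝ) with hU
  set d : n → ℝ := hH.eigenvalues with hd
  have hUstar : U * star U = 1 := (Matrix.mem_unitaryGroup_iff).mp hH.eigenvectorUnitary.2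
  have hstarU : star U * U = 1 := (Matrix.mem_unitaryGroup_iff').mp hH.eigenvectorUnitary.2
  have hspec : S = U * diagonal d * star U := by
    have := hH.spectral_theorem
    rwa [show RCLike.ofReal ∘ hH.eigenvalues = d by
      rw [RCLike.ofReal_real_eq_id]; rfl] at this
  -- eigenvalue bounds
  have hd0 : ∀ i, 0 < d i := fun i => hS.eigenvalues_pos i
  have hd1 : ∀ i, d i < 1 := by
    intro i
    set v : n → ℝ := ⇑(hH.eigenvectorBasis i) with hv
    have hv0 : v ≠ 0 := by
      rw [hv, Ne, WithLp.ofLp_eq_zero]; exact hH.eigenvectorBasis.orthonormal.ne_zero i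
    have hvv : 0 < v ⬝ᵥ v := by
      simpa using dotProduct_star_self_pos_iff.2 hv0
    have hpos := h1S.dotProduct_mulVec_pos hv0
    rw [sub_mulVec, one_mulVec, dotProduct_sub, hH.mulVec_eigenvectorBasis i,
      dotProduct_smul, star_trivial, smul_eq_mul] at hpos
    nlinarith
  -- conjugate powers
  have hpow : ∀ k : ℕ, S ^ k = U * (diagonal d) ^ k * star U := by
    intro k
    induction k with
    | zero => simp [hUstar]
    | succ k ih =>
      rw [pow_succ, pow_succ, ih, hspec]
      rw [show U * diagonal d ^ k * star U * (U * diagonal d * star U)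
          = U * diagonal d ^ k * (star U * U) * diagonal d * star U by
        noncomm_ring]
      rw [hstarU, mul_one, mul_assoc U]
  have hkey : (1 : Matrix n n ℝ) - ε • S ^ N
      = U * diagonal (fun i => 1 - ε * d i ^ N) * star U := by
    rw [hpow N, diagonal_pow]
    have h2 : (diagonal fun i => 1 - ε * d i ^ N)
        = 1 - ε • diagonal (d ^ N) := by
      rw [← diagonal_one, ← diagonal_smul, ← diagonal_sub]
      congr 1
    rw [h2, mul_sub, sub_mul, Matrix.mul_smul, Matrix.smul_mul, mul_one, hUstar]
  rw [hkey, isUnit_iff_isUnit_det, det_mul, det_mul, mul_right_comm, ← det_mul, hUstar,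
    det_one, one_mul, det_diagonal]
  refine isUnit_iff_ne_zero.2 (ne_of_gt (Finset.prod_pos fun i _ => ?_))
  have h1 : d i ^ N < 1 := pow_lt_one₀ (le_of_lt (hd0 i)) (hd1 i) hN
  have h2 : ε * d i ^ N ≤ d i ^ N := by
    nlinarith [pow_pos (hd0 i) N]
  linarith

end Aux

/-- With `A₀ = M + τK` for symmetric positive definite `M, K`
and `Z_ε = ε⁻¹ (I_J − ε (A₀⁻¹ M)^N) M⁻¹`, the matrix `Z_ε` is invertible for
every `ε ∈ (0, 1]`. -/
theorem statement1 (J N : ℕ) (hJ : 0 < J) (hN : 0 < N) (τ : ℝ) (hτ : 0 < τ)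
    (M K : Matrix (Fin J) (Fin J) ℝ) (hM : M.PosDef) (hK : K.PosDef)
    (A₀ : Matrix (Fin J) (Fin J) ℝ) (hA₀ : A₀ = M + τ • K)
    (ε : ℝ) (hε0 : 0 < ε) (hε1 : ε ≤ 1)
    (Zε : Matrix (Fin J) (Fin J) ℝ)
    (hZε : Zε = ε⁻¹ • ((1 - ε • (A₀⁻¹ * M) ^ N) * M⁻¹)) :
    IsUnit Zε := by
  have hA0 : A₀.PosDef := hA₀ ▸ hM.add_posSemidef (aux_posDef_smul hτ hK).posSemidef
  have hAinv : (A₀⁻¹).PosDef := hA0.inv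
  open scoped MatrixOrder in
  set R : Matrix (Fin J) (Fin J) ℝ := CFC.sqrt M with hR
  open scoped MatrixOrder in
  have hRps : R.PosSemidef := (CFC.sqrt_nonneg M).posSemidef
  have hRH : Rᴴ = R := hRps.1
  open scoped MatrixOrder in
  have hRR : R * R = M := CFC.sqrt_mul_sqrt_self M hM.posSemidef.nonneg
  have hRdet : IsUnit R.det := by
    refine isUnit_iff_ne_zero.2 fun h => ?_
    have := congrArg Matrix.det hRR
    rw [det_mul, h, mul_zero] at this
    exact (ne_of_gt hM.det_pos) this.symm
  have hRu : IsUnit R := (isUnit_iff_isUnit_det R).2 hRdet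
  have hRinv : R * R⁻¹ = 1 := mul_nonsing_inv R hRdet
  have hinvR : R⁻¹ * R = 1 := nonsing_inv_mul R hRdet
  have hMdet : IsUnit M.det := isUnit_iff_ne_zero.2 (ne_of_gt hM.det_pos)
  have hA0det : IsUnit A₀.det := isUnit_iff_ne_zero.2 (ne_of_gt hA0.det_pos)
  have hA0inv : A₀ * A₀⁻¹ = 1 := mul_nonsing_inv A₀ hA0det
  have hinvA0 : A₀⁻¹ * A₀ = 1 := nonsing_inv_mul A₀ hA0det
  have hMinv : M * M⁻¹ = 1 := mul_nonsing_inv M hMdet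
  have hinvM : M⁻¹ * M = 1 := nonsing_inv_mul M hMdet
  set S : Matrix (Fin J) (Fin J) ℝ := R * A₀⁻¹ * R with hS
  have hSpd : S.PosDef := by
    have := aux_posDef_conj hAinv hRu
    rwa [hRH] at this
  -- 1 - S  is positive definite
  have hRMR : R * M⁻¹ * R = 1 := by
    rw [← hRR, Matrix.mul_inv_rev, ← mul_assoc R R⁻¹, hRinv, one_mul, hinvR]
  have hC : (τ • K + (τ * τ) • (K * M⁻¹ * K)).PosDef := by
    refine (aux_posDef_smul hτ hK).add_posSemidef
      (aux_posDef_smul (mul_pos hτ hτ) ?_).posSemidef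
    have := aux_posDef_conj hM.inv hK.isUnit
    rwa [hK.1.eq] at this
  have hmid : A₀ * (M⁻¹ - A₀⁻¹) * A₀ = τ • K + (τ * τ) • (K * M⁻¹ * K) := by
    have e1 : (M + τ • K) * M⁻¹ = 1 + τ • (K * M⁻¹) := by
      rw [add_mul, hMinv, Matrix.smul_mul]
    have e2 : ((1 : Matrix (Fin J) (Fin J) ℝ) + τ • (K * M⁻¹)) * (M + τ • K)
        = M + τ • K + τ • K + (τ * τ) • (K * M⁻¹ * K) := by
      rw [add_mul, one_mul, Matrix.smul_mul, mul_add, mul_assoc K M⁻¹ M, hinvM, mul_one,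
        Matrix.mul_smul, smul_add, smul_smul]
      abel
    rw [mul_sub, sub_mul, mul_assoc A₀ A₀⁻¹ A₀, hinvA0, mul_one, hA₀, e1, e2]
    abel
  have hdiffeq : M⁻¹ - A₀⁻¹ = A₀⁻¹ * (τ • K + (τ * τ) • (K * M⁻¹ * K)) * A₀⁻¹ := by
    rw [← hmid, mul_assoc, mul_assoc, hA0inv, mul_one, ← mul_assoc, hinvA0, one_mul]
  have hdiff : (M⁻¹ - A₀⁻¹).PosDef := by
    rw [hdiffeq]
    have := aux_posDef_conj hC (isUnit_nonsing_inv_iff.2 hA0.isUnit)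
    rwa [hAinv.1.eq] at this
  have h1S : ((1 : Matrix (Fin J) (Fin J) ℝ) - S).PosDef := by
    have heq : (1 : Matrix (Fin J) (Fin J) ℝ) - S = R * (M⁻¹ - A₀⁻¹) * R := by
      rw [mul_sub, sub_mul, hRMR, hS]
    rw [heq]
    have := aux_posDef_conj hdiff hRu
    rwa [hRH] at this
  -- similarity
  have hBpow : ∀ k : ℕ, (A₀⁻¹ * M) ^ k = R⁻¹ * S ^ k * R := by
    have hB : A₀⁻¹ * M = R⁻¹ * S * R := by
      rw [hS, ← mul_assoc, ← mul_assoc, hinvR, one_mul, mul_assoc, hRR]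
    intro k
    induction k with
    | zero => simp [hinvR]
    | succ k ih =>
      rw [pow_succ, pow_succ, ih, hB]
      rw [show R⁻¹ * S ^ k * R * (R⁻¹ * S * R) = R⁻¹ * S ^ k * (R * R⁻¹) * S * R by
        noncomm_ring]
      rw [hRinv, mul_one, mul_assoc R⁻¹ (S ^ k) S]
  have hkey : IsUnit ((1 : Matrix (Fin J) (Fin J) ℝ) - ε • S ^ N) :=
    aux_unit_one_sub_smul_pow hSpd h1S hε0 hε1 hN.ne'
  have hZeq : Zε = ε⁻¹ • (R⁻¹ * ((1 : Matrix (Fin J) (Fin J) ℝ) - ε • S ^ N) * R * M⁻¹) := by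
    rw [hZε, hBpow N]
    congr 2
    rw [mul_sub, sub_mul, mul_one, hinvR, Matrix.mul_smul, Matrix.smul_mul]
  rw [hZeq]
  have hu : IsUnit (R⁻¹ * ((1 : Matrix (Fin J) (Fin J) ℝ) - ε • S ^ N) * R * M⁻¹) :=
    (((isUnit_nonsing_inv_iff.2 hRu).mul hkey).mul hRu).mul (isUnit_nonsing_inv_iff.2 hM.isUnit)
  have : ε⁻¹ • (R⁻¹ * ((1 : Matrix (Fin J) (Fin J) ℝ) - ε • S ^ N) * R * M⁻¹)
      = (ε⁻¹ • (1 : Matrix (Fin J) (Fin J) ℝ))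
        * (R⁻¹ * ((1 : Matrix (Fin J) (Fin J) ℝ) - ε • S ^ N) * R * M⁻¹) := by
    rw [Matrix.smul_mul, one_mul]
  rw [this]
  refine (IsUnit.mul ?_ hu)
  refine (isUnit_iff_isUnit_det _).2 ?_
  rw [det_smul, det_one, mul_one]
  exact (isUnit_iff_ne_zero.2 (inv_ne_zero hε0.ne')).pow _
end

section
/- For every ε ∈ (0,1], the matrix P_ε is invertible and P_ε⁻¹ = L⁻¹ + L⁻¹E₁Z_ε⁻¹E_N^T L⁻¹. -/
open Matrix

/-- The all-at-once block lower bidiagonal matrix `L` whose `(i,j)`-th `J × J`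
block equals `A₀` if `i = j`, `−M` if `i = j + 1`, and `0` otherwise. -/
def Lmat (N J : ℕ) (A₀ M : Matrix (Fin J) (Fin J) ℝ) :
    Matrix (Fin N × Fin J) (Fin N × Fin J) ℝ :=
  Matrix.of fun p q =>
    if p.1 = q.1 then A₀ p.2 q.2
    else if (p.1 : ℕ) = (q.1 : ℕ) + 1 then -M p.2 q.2 else 0

/-- `E_i = e_i ⊗ I_J`, where `e_i` is the `i`-th standard basis vector of `ℝ^N`. -/
def Emat (N J : ℕ) (i : Fin N) : Matrix (Fin N × Fin J) (Fin J) ℝ :=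
  Matrix.of fun p y => if p.1 = i ∧ p.2 = y then 1 else 0

/-- The block `ε`-circulant preconditioner `P_ε`, agreeing with `L` in every
block except that the top-right `(1,N)`-th `J × J` block equals `−εM`;
equivalently `P_ε = L − ε E₁ M E_Nᵀ`. -/
noncomputable def Pmat (N J : ℕ) (hN : 0 < N) (A₀ M : Matrix (Fin J) (Fin J) ℝ)
    (ε : ℝ) : Matrix (Fin N × Fin J) (Fin N × Fin J) ℝ :=
  Lmat N J A₀ M -
    ε • (Emat N J ⟨0, hN⟩ * M * (Emat N J ⟨N - 1, Nat.sub_lt hN Nat.one_pos⟩)ᵀ)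


lemma spectral (J : ℕ) (τ : ℝ) (hτ : 0 < τ) (M K A₀ : Matrix (Fin J) (Fin J) ℝ)
    (hM : M.PosDef) (hK : K.PosDef) (hA₀ : A₀ = M + τ • K)
    (N : ℕ) (hN : 0 < N) (ε : ℝ) (hε0 : 0 < ε) (hε1 : ε ≤ 1) :
    IsUnit (1 - ε • (A₀⁻¹ * M) ^ N).det := by
  set S := A₀⁻¹ * M with hS
  have hτK : ∀ x : Fin J → ℝ, x ≠ 0 → 0 < x ⬝ᵥ (τ • K) *ᵥ x := by
    intro x hx
    have h' : 0 < x ⬝ᵥ K *ᵥ x := by simpa using hK.dotProduct_mulVec_pos hx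
    rw [Matrix.smul_mulVec, dotProduct_smul]
    exact mul_pos hτ h'
  have hApd : A₀.PosDef := by
    refine Matrix.PosDef.of_dotProduct_mulVec_pos ?_ ?_
    · have hMT : Mᵀ = M := by simpa [Matrix.IsHermitian] using hM.1
      have hKT : Kᵀ = K := by simpa [Matrix.IsHermitian] using hK.1
      rw [hA₀]
      simp [Matrix.IsHermitian, Matrix.conjTranspose_add, Matrix.conjTranspose_smul,
        hMT, hKT]
    · intro x hx
      have h1 : 0 < x ⬝ᵥ M *ᵥ x := by simpa using hM.dotProduct_mulVec_pos hx
      have h2 := hτK x hx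
      rw [hA₀, Matrix.add_mulVec, dotProduct_add]
      simpa using add_pos h1 h2
  have hAdet : IsUnit A₀.det := isUnit_iff_ne_zero.mpr hApd.det_pos.ne'
  have hq : ∀ x : Fin J → ℝ, x ≠ 0 → 0 < x ⬝ᵥ M *ᵥ x := by
    intro x hx; simpa using hM.dotProduct_mulVec_pos hx
  have hqnn : ∀ x : Fin J → ℝ, 0 ≤ x ⬝ᵥ M *ᵥ x := by
    intro x
    by_cases hx : x = 0
    · simp [hx]
    · exact (hq x hx).le
  have hMT : Mᵀ = M := by simpa [Matrix.IsHermitian] using hM.1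
  have hsymm : ∀ x y : Fin J → ℝ, x ⬝ᵥ M *ᵥ y = y ⬝ᵥ M *ᵥ x := by
    intro x y
    rw [Matrix.dotProduct_mulVec, ← Matrix.mulVec_transpose, hMT, dotProduct_comm]
  have hAy : ∀ x : Fin J → ℝ, A₀ *ᵥ (S *ᵥ x) = M *ᵥ x := by
    intro x
    rw [Matrix.mulVec_mulVec, hS, ← mul_assoc, Matrix.mul_nonsing_inv _ hAdet, one_mul]
  have step : ∀ x : Fin J → ℝ, x ≠ 0 →
      S *ᵥ x ≠ 0 ∧ (S *ᵥ x) ⬝ᵥ M *ᵥ (S *ᵥ x) < x ⬝ᵥ M *ᵥ x := by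
    intro x hx
    set y := S *ᵥ x with hy
    have hAyx : A₀ *ᵥ y = M *ᵥ x := hAy x
    have hy0 : y ≠ 0 := by
      intro h
      have hMx : M *ᵥ x = 0 := by rw [← hAyx, h, Matrix.mulVec_zero]
      have := hq x hx
      rw [hMx] at this
      simp at this
    have hqy : 0 < y ⬝ᵥ M *ᵥ y := hq y hy0
    set p : ℝ := y ⬝ᵥ M *ᵥ x with hp
    have h1 : y ⬝ᵥ M *ᵥ y < p := by
      have heq : p = y ⬝ᵥ M *ᵥ y + y ⬝ᵥ (τ • K) *ᵥ y := by
        rw [hp, ← hAyx, hA₀, Matrix.add_mulVec, dotProduct_add]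
      have hk := hτK y hy0
      linarith
    have hxy : x ⬝ᵥ M *ᵥ y = p := hsymm x y
    have CS : p ^ 2 ≤ (x ⬝ᵥ M *ᵥ x) * (y ⬝ᵥ M *ᵥ y) := by
      set t : ℝ := p / (y ⬝ᵥ M *ᵥ y) with ht
      have h0 : 0 ≤ (x - t • y) ⬝ᵥ M *ᵥ (x - t • y) := hqnn _
      have hexp : (x - t • y) ⬝ᵥ M *ᵥ (x - t • y)
          = x ⬝ᵥ M *ᵥ x - 2 * t * p + t ^ 2 * (y ⬝ᵥ M *ᵥ y) := by
        simp only [Matrix.mulVec_sub, Matrix.mulVec_smul, dotProduct_sub, sub_dotProduct,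
          dotProduct_smul, smul_dotProduct, smul_eq_mul]
        rw [hxy, ← hp]
        ring
      rw [hexp] at h0
      have htv : t * (y ⬝ᵥ M *ᵥ y) = p := by
        rw [ht]; field_simp
      nlinarith [h0, hqy]
    refine ⟨hy0, ?_⟩
    nlinarith [CS, h1, hqy]
  have iter : ∀ n : ℕ, ∀ x : Fin J → ℝ, x ≠ 0 →
      (S ^ n) *ᵥ x ≠ 0 ∧ ((S ^ n) *ᵥ x) ⬝ᵥ M *ᵥ ((S ^ n) *ᵥ x) ≤ x ⬝ᵥ M *ᵥ x := by
    intro n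
    induction n with
    | zero => intro x hx; simp [Matrix.one_mulVec]; exact hx
    | succ m ih =>
      intro x hx
      obtain ⟨h1, h2⟩ := ih x hx
      obtain ⟨h3, h4⟩ := step _ h1
      have hrw : (S ^ (m + 1)) *ᵥ x = S *ᵥ ((S ^ m) *ᵥ x) := by
        rw [Matrix.mulVec_mulVec, ← pow_succ']
      rw [hrw]
      exact ⟨h3, le_trans h4.le h2⟩
  rw [isUnit_iff_ne_zero]
  intro hdet
  obtain ⟨v, hv0, hv⟩ := (Matrix.exists_mulVec_eq_zero_iff).mpr hdet
  have hvv : (S ^ N) *ᵥ v = ε⁻¹ • v := by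
    have h1 : v - ε • ((S ^ N) *ᵥ v) = 0 := by
      rw [← hv, Matrix.sub_mulVec, Matrix.one_mulVec, Matrix.smul_mulVec]
    have h2 : ε • ((S ^ N) *ᵥ v) = v := (sub_eq_zero.mp h1).symm
    have h3 : ε⁻¹ • (ε • ((S ^ N) *ᵥ v)) = ε⁻¹ • v := by rw [h2]
    rwa [smul_smul, inv_mul_cancel₀ hε0.ne', one_smul] at h3
  obtain ⟨m, rfl⟩ : ∃ m, N = m + 1 := ⟨N - 1, by omega⟩
  obtain ⟨h1, h2⟩ := iter m v hv0
  obtain ⟨h3, h4⟩ := step _ h1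
  have hrw : (S ^ (m + 1)) *ᵥ v = S *ᵥ ((S ^ m) *ᵥ v) := by
    rw [Matrix.mulVec_mulVec, ← pow_succ']
  have hstrict : ((S ^ (m+1)) *ᵥ v) ⬝ᵥ M *ᵥ ((S ^ (m+1)) *ᵥ v) < v ⬝ᵥ M *ᵥ v := by
    rw [hrw]; exact lt_of_lt_of_le h4 h2
  rw [hvv] at hstrict
  have hqv : 0 < v ⬝ᵥ M *ᵥ v := hq v hv0
  have hscale : (ε⁻¹ • v) ⬝ᵥ M *ᵥ (ε⁻¹ • v) = ε⁻¹ ^ 2 * (v ⬝ᵥ M *ᵥ v) := by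
    rw [Matrix.mulVec_smul, dotProduct_smul, smul_dotProduct]
    simp only [smul_eq_mul]; ring
  rw [hscale] at hstrict
  have hε' : 1 ≤ ε⁻¹ := (one_le_inv₀ hε0).mpr hε1
  have h5 : 1 ≤ ε⁻¹ ^ 2 := by nlinarith
  nlinarith [mul_le_mul_of_nonneg_right h5 hqv.le]


noncomputable def Ginv (N J : ℕ) (A₀ M : Matrix (Fin J) (Fin J) ℝ) :
    Matrix (Fin N × Fin J) (Fin N × Fin J) ℝ :=
  Matrix.of fun p q =>
    if (q.1 : ℕ) ≤ (p.1 : ℕ) then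
      ((A₀⁻¹ * M) ^ ((p.1 : ℕ) - (q.1 : ℕ)) * A₀⁻¹) p.2 q.2
    else 0

lemma Lmat_mul_Ginv (N J : ℕ) (A₀ M : Matrix (Fin J) (Fin J) ℝ)
    (hA : IsUnit A₀.det) : Lmat N J A₀ M * Ginv N J A₀ M = 1 := by
  have hAA : A₀ * A₀⁻¹ = 1 := Matrix.mul_nonsing_inv _ hA
  ext p q
  rw [Matrix.mul_apply, Fintype.sum_prod_type]
  have hsplit : ∀ (i : Fin N) (z : Fin J), Lmat N J A₀ M p (i, z) =
      (if p.1 = i then A₀ p.2 z else 0)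
      + (if (p.1 : ℕ) = (i : ℕ) + 1 then -M p.2 z else 0) := by
    intro i z
    simp only [Lmat, Matrix.of_apply]
    split_ifs with h1 h2 <;> first
      | rfl
      | (exfalso; subst h1; omega)
      | simp
  simp only [hsplit, add_mul, Finset.sum_add_distrib]
  have hterm1 : ∀ i : Fin N,
      (∑ z : Fin J, (if p.1 = i then A₀ p.2 z else 0) * Ginv N J A₀ M (i, z) q)
      = if p.1 = i then ∑ z : Fin J, A₀ p.2 z * Ginv N J A₀ M (i, z) q else 0 := by
    intro i; split_ifs with h <;> simp [h]
  have hterm2 : ∀ i : Fin N,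
      (∑ z : Fin J, (if (p.1:ℕ) = (i:ℕ) + 1 then -M p.2 z else 0) * Ginv N J A₀ M (i, z) q)
      = if (p.1:ℕ) = (i:ℕ) + 1 then
          ∑ z : Fin J, (-M p.2 z) * Ginv N J A₀ M (i, z) q else 0 := by
    intro i; split_ifs with h <;> simp [h]
  simp only [hterm1, hterm2]
  rw [Finset.sum_ite_eq (Finset.univ : Finset (Fin N)) p.1
    (fun i => ∑ z : Fin J, A₀ p.2 z * Ginv N J A₀ M (i, z) q), if_pos (Finset.mem_univ _)]
  -- second sum
  have hS2 : (∑ i : Fin N, if (p.1:ℕ) = (i:ℕ) + 1 then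
      ∑ z : Fin J, (-M p.2 z) * Ginv N J A₀ M (i, z) q else 0)
      = if h : (p.1:ℕ) ≠ 0 then
          ∑ z : Fin J, (-M p.2 z) * Ginv N J A₀ M (⟨(p.1:ℕ) - 1, by omega⟩, z) q else 0 := by
    split_ifs with h
    · rw [Finset.sum_eq_single (⟨(p.1:ℕ) - 1, by omega⟩ : Fin N)]
      · rw [if_pos (by simp; omega)]
      · intro i _ hi
        rw [if_neg]
        intro hc
        exact hi (by apply Fin.ext; simp; omega)
      · intro h'; simp at h'
    · push_neg at h
      apply Finset.sum_eq_zero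
      intro i _
      rw [if_neg (by omega)]
  rw [hS2]
  rcases lt_trichotomy (p.1 : ℕ) (q.1 : ℕ) with hlt | heq | hgt
  · -- p.1 < q.1 : everything vanishes
    have hg1 : ∀ z, Ginv N J A₀ M (p.1, z) q = 0 := by
      intro z; simp only [Ginv, Matrix.of_apply]; rw [if_neg (by omega)]
    rw [Finset.sum_congr rfl fun z _ => by rw [hg1 z, mul_zero]]
    have h2 : (if h : (p.1:ℕ) ≠ 0 then
        ∑ z : Fin J, (-M p.2 z) * Ginv N J A₀ M (⟨(p.1:ℕ) - 1, by omega⟩, z) q else 0) = 0 := by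
      split_ifs with h
      · apply Finset.sum_eq_zero; intro z _
        simp only [Ginv, Matrix.of_apply]
        rw [if_neg (by simp; omega), mul_zero]
      · rfl
    rw [h2]
    have : p ≠ q := by intro h; rw [h] at hlt; omega
    simp [Matrix.one_apply_ne this]
  · -- p.1 = q.1 : diagonal
    have hq1 : p.1 = q.1 := Fin.ext heq
    have hg1 : ∀ z, Ginv N J A₀ M (p.1, z) q = A₀⁻¹ z q.2 := by
      intro z; simp only [Ginv, Matrix.of_apply]
      rw [if_pos (by omega)]
      have : (p.1:ℕ) - (q.1:ℕ) = 0 := by omega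
      rw [this, pow_zero, one_mul]
    have hterm : (∑ z : Fin J, A₀ p.2 z * Ginv N J A₀ M (p.1, z) q) = (1 : Matrix (Fin J) (Fin J) ℝ) p.2 q.2 := by
      rw [Finset.sum_congr rfl fun z _ => by rw [hg1 z], ← Matrix.mul_apply, hAA]
    rw [hterm]
    have h2 : (if h : (p.1:ℕ) ≠ 0 then
        ∑ z : Fin J, (-M p.2 z) * Ginv N J A₀ M (⟨(p.1:ℕ) - 1, by omega⟩, z) q else 0) = 0 := by
      split_ifs with h
      · apply Finset.sum_eq_zero; intro z _
        simp only [Ginv, Matrix.of_apply]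
        rw [if_neg (by simp; omega), mul_zero]
      · rfl
    rw [h2, add_zero]
    by_cases hpq : p = q
    · subst hpq; rw [Matrix.one_apply_eq, Matrix.one_apply_eq]
    · have : p.2 ≠ q.2 := by
        intro h2'; exact hpq (Prod.ext hq1 h2')
      rw [Matrix.one_apply_ne this, Matrix.one_apply_ne hpq]
  · -- q.1 < p.1 : telescoping
    have hp0 : (p.1:ℕ) ≠ 0 := by omega
    set d : ℕ := (p.1:ℕ) - (q.1:ℕ) with hd
    have hd1 : 1 ≤ d := by omega
    have hg1 : ∀ z, Ginv N J A₀ M (p.1, z) q = ((A₀⁻¹ * M) ^ d * A₀⁻¹) z q.2 := by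
      intro z; simp only [Ginv, Matrix.of_apply]; rw [if_pos (by omega)]
    have hg2 : ∀ z, Ginv N J A₀ M (⟨(p.1:ℕ) - 1, by omega⟩, z) q
        = ((A₀⁻¹ * M) ^ (d - 1) * A₀⁻¹) z q.2 := by
      intro z; simp only [Ginv, Matrix.of_apply, Fin.val_mk]
      rw [if_pos (by omega), show (p.1:ℕ) - 1 - (q.1:ℕ) = d - 1 from by omega]
    have ht1 : (∑ z : Fin J, A₀ p.2 z * Ginv N J A₀ M (p.1, z) q)
        = (A₀ * ((A₀⁻¹ * M) ^ d * A₀⁻¹)) p.2 q.2 := by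
      rw [Finset.sum_congr rfl fun z _ => by rw [hg1 z], ← Matrix.mul_apply]
    have ht2 : (∑ z : Fin J, (-M p.2 z) * Ginv N J A₀ M (⟨(p.1:ℕ) - 1, by omega⟩, z) q)
        = (-(M * ((A₀⁻¹ * M) ^ (d - 1) * A₀⁻¹))) p.2 q.2 := by
      rw [Finset.sum_congr rfl fun z _ => by rw [hg2 z]]
      simp only [neg_mul, Matrix.neg_apply, Matrix.mul_apply, Finset.sum_neg_distrib]
    rw [ht1, dif_pos hp0, ht2]
    have hkey : ∀ e : ℕ, A₀ * ((A₀⁻¹ * M) ^ (e + 1) * A₀⁻¹) = M * ((A₀⁻¹ * M) ^ e * A₀⁻¹) := by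
      intro e
      have h1 : A₀ * ((A₀⁻¹ * M) ^ (e + 1) * A₀⁻¹)
          = (A₀ * A₀⁻¹) * (M * ((A₀⁻¹ * M) ^ e * A₀⁻¹)) := by
        rw [pow_succ']; noncomm_ring
      rw [h1, hAA, one_mul]
    obtain ⟨e, he⟩ : ∃ e, d = e + 1 := ⟨d - 1, by omega⟩
    rw [he, Nat.add_sub_cancel, hkey e]
    have : p ≠ q := by intro h; rw [h] at hgt; omega
    simp [Matrix.one_apply_ne this]

lemma Emat_block (N J : ℕ) (i j : Fin N) (H : Matrix (Fin N × Fin J) (Fin N × Fin J) ℝ) :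
    (Emat N J i)ᵀ * H * Emat N J j = Matrix.of fun a b => H (i, a) (j, b) := by
  ext a b
  rw [Matrix.mul_apply, Fintype.sum_prod_type]
  have h1 : ∀ r : Fin N × Fin J, ((Emat N J i)ᵀ * H) a r = H (i, a) r := by
    intro r
    rw [Matrix.mul_apply, Fintype.sum_prod_type]
    simp [Emat, Matrix.transpose_apply, ite_and, Finset.sum_ite_eq, Finset.sum_ite_eq']
  simp only [h1]
  simp [Emat, ite_and, Finset.sum_ite_eq, Finset.sum_ite_eq']

/-- For every `ε ∈ (0,1]`, `P_ε` is invertible and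
`P_ε⁻¹ = L⁻¹ + L⁻¹ E₁ Z_ε⁻¹ E_Nᵀ L⁻¹`. -/
theorem statement3 (N J : ℕ) (hN : 0 < N) (hJ : 0 < J) (τ : ℝ) (hτ : 0 < τ)
    (M K : Matrix (Fin J) (Fin J) ℝ) (hM : M.PosDef) (hK : K.PosDef)
    (A₀ : Matrix (Fin J) (Fin J) ℝ) (hA₀ : A₀ = M + τ • K)
    (ε : ℝ) (hε0 : 0 < ε) (hε1 : ε ≤ 1)
    (Zε : Matrix (Fin J) (Fin J) ℝ)
    (hZε : Zε = ε⁻¹ • ((1 - ε • (A₀⁻¹ * M) ^ N) * M⁻¹)) :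
    IsUnit (Pmat N J hN A₀ M ε) ∧
    (Pmat N J hN A₀ M ε)⁻¹ =
      (Lmat N J A₀ M)⁻¹ +
        (Lmat N J A₀ M)⁻¹ * Emat N J ⟨0, hN⟩ * Zε⁻¹ *
          (Emat N J ⟨N - 1, Nat.sub_lt hN Nat.one_pos⟩)ᵀ * (Lmat N J A₀ M)⁻¹ := by
  have hApd : A₀.PosDef := by
    refine Matrix.PosDef.of_dotProduct_mulVec_pos ?_ ?_
    · have hMT : Mᵀ = M := by simpa [Matrix.IsHermitian] using hM.1
      have hKT : Kᵀ = K := by simpa [Matrix.IsHermitian] using hK.1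
      rw [hA₀]
      simp [Matrix.IsHermitian, Matrix.conjTranspose_add, Matrix.conjTranspose_smul, hMT, hKT]
    · intro x hx
      have h1 : 0 < x ⬝ᵥ M *ᵥ x := by simpa using hM.dotProduct_mulVec_pos hx
      have h2 : 0 < x ⬝ᵥ (τ • K) *ᵥ x := by
        have h' : 0 < x ⬝ᵥ K *ᵥ x := by simpa using hK.dotProduct_mulVec_pos hx
        rw [Matrix.smul_mulVec, dotProduct_smul]
        exact mul_pos hτ h'
      rw [hA₀, Matrix.add_mulVec, dotProduct_add]
      simpa using add_pos h1 h2
  have hAdet : IsUnit A₀.det := isUnit_iff_ne_zero.mpr hApd.det_pos.ne'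
  have hMdet : IsUnit M.det := isUnit_iff_ne_zero.mpr hM.det_pos.ne'
  have hMM : M * M⁻¹ = 1 := Matrix.mul_nonsing_inv _ hMdet
  set S : Matrix (Fin J) (Fin J) ℝ := A₀⁻¹ * M with hS
  set G := Ginv N J A₀ M with hG
  set E1 := Emat N J (⟨0, hN⟩ : Fin N) with hE1
  set EN := Emat N J (⟨N - 1, Nat.sub_lt hN Nat.one_pos⟩ : Fin N) with hEN
  set L := Lmat N J A₀ M with hL
  have hLG : L * G = 1 := Lmat_mul_Ginv N J A₀ M hAdet
  have hLinv : L⁻¹ = G := Matrix.inv_eq_right_inv hLG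
  set B : Matrix (Fin J) (Fin J) ℝ := S ^ (N - 1) * A₀⁻¹ with hB
  have hENGE1 : ENᵀ * G * E1 = B := by
    rw [hEN, hE1, hG, Emat_block]
    ext a b
    simp only [Matrix.of_apply, Ginv, hB]
    rw [if_pos (by simp)]
    simp [hS]
  have hNsucc : N = (N - 1) + 1 := by omega
  have hSM : S * M⁻¹ = A₀⁻¹ := by rw [hS, mul_assoc, hMM, mul_one]
  have hMB : S ^ N * M⁻¹ = B := by
    conv_lhs => rw [hNsucc]
    rw [pow_succ, mul_assoc, hSM]
  have hMZ : ε • (M * Zε) = 1 - ε • (M * B) := by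
    rw [hZε, Matrix.mul_smul, smul_smul, mul_inv_cancel₀ hε0.ne', one_smul,
      sub_mul, one_mul, Matrix.smul_mul, hMB, Matrix.mul_sub, hMM, Matrix.mul_smul]
  have hZdet : IsUnit Zε.det := by
    have hsp := spectral J τ hτ M K A₀ hM hK hA₀ N hN ε hε0 hε1
    rw [hZε, isUnit_iff_ne_zero]
    rw [Matrix.det_smul, Matrix.det_mul, Matrix.det_nonsing_inv]
    refine mul_ne_zero (pow_ne_zero _ (inv_ne_zero hε0.ne')) (mul_ne_zero ?_ ?_)
    · exact isUnit_iff_ne_zero.mp hsp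
    · simp only [Ring.inverse_eq_inv']
      exact inv_ne_zero (isUnit_iff_ne_zero.mp hMdet)
  have hZZ : Zε * Zε⁻¹ = 1 := Matrix.mul_nonsing_inv _ hZdet
  have hkey : Zε⁻¹ = ε • M + ε • (M * (B * Zε⁻¹)) := by
    have h1 : ε • (M * Zε) * Zε⁻¹ = (1 - ε • (M * B)) * Zε⁻¹ := by rw [hMZ]
    rw [Matrix.smul_mul, mul_assoc, hZZ, mul_one, sub_mul, one_mul, Matrix.smul_mul,
      mul_assoc] at h1
    exact (sub_eq_iff_eq_add.mp h1.symm)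
  set Mε : Matrix (Fin J) (Fin J) ℝ := ε • M with hMε
  have hkey' : Zε⁻¹ = Mε + Mε * (ENᵀ * G * E1) * Zε⁻¹ := by
    rw [hENGE1, hMε, Matrix.smul_mul, Matrix.smul_mul, mul_assoc]
    exact hkey
  have hP : Pmat N J hN A₀ M ε = L - E1 * Mε * ENᵀ := by
    rw [Pmat, hMε, Matrix.mul_smul, Matrix.smul_mul]
  clear hkey hMZ hMB hSM hZε hB hENGE1
  clear_value S G E1 EN L B Mε
  set Q := G + G * E1 * Zε⁻¹ * ENᵀ * G with hQ
  have hPQ : Pmat N J hN A₀ M ε * Q = 1 := by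
    have expand : Pmat N J hN A₀ M ε * Q
        = L * G + L * G * (E1 * Zε⁻¹ * (ENᵀ * G))
          - E1 * (Mε + Mε * (ENᵀ * G * E1) * Zε⁻¹) * (ENᵀ * G) := by
      rw [hP, hQ]
      simp only [Matrix.sub_mul, Matrix.mul_sub, Matrix.mul_add, Matrix.add_mul,
        Matrix.mul_assoc]
      abel
    rw [expand, hLG, ← hkey']
    simp only [Matrix.one_mul]
    abel
  constructor
  · exact ⟨⟨Pmat N J hN A₀ M ε, Q, hPQ, mul_eq_one_comm.mp hPQ⟩, rfl⟩
  · rw [Matrix.inv_eq_right_inv hPQ, hLinv]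
end

section
/- For every ε ∈ (0,1], P_ε⁻¹L = I_{NJ} + L⁻¹E₁Z_ε⁻¹E_N^T; equivalently, for 1 ≤ i, j ≤ N the (i,j)-th J×J block of P_ε⁻¹L equals I_J if i = j < N, equals (A₀⁻¹M)^{i−1}A₀⁻¹Z_ε⁻¹ if j = N and i < N, equals I_J + (A₀⁻¹M)^{N−1}A₀⁻¹Z_ε⁻¹ if i = j = N, and equals the zero matrix otherwise. -/
open Matrix

namespace Stmt4

abbrev Rm (J : ℕ) := Matrix (Fin J) (Fin J) ℝ

def toFlat {N J : ℕ} (X : Matrix (Fin N) (Fin N) (Rm J)) :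
    Matrix (Fin N × Fin J) (Fin N × Fin J) ℝ :=
  Matrix.of fun p q => X p.1 q.1 p.2 q.2

lemma toFlat_mul {N J : ℕ} (X Y : Matrix (Fin N) (Fin N) (Rm J)) :
    toFlat (X * Y) = toFlat X * toFlat Y := by
  ext ⟨i, x⟩ ⟨j, y⟩
  simp [toFlat, Matrix.mul_apply, Matrix.sum_apply, Fintype.sum_prod_type]

lemma toFlat_one {N J : ℕ} : toFlat (1 : Matrix (Fin N) (Fin N) (Rm J)) = 1 := by
  ext ⟨i, x⟩ ⟨j, y⟩
  by_cases h : i = j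
  · subst h; by_cases hxy : x = y <;>
      simp [toFlat, Matrix.one_apply, Prod.ext_iff, hxy]
  · simp [toFlat, Matrix.one_apply, Prod.ext_iff, h]

lemma toFlat_add {N J : ℕ} (X Y : Matrix (Fin N) (Fin N) (Rm J)) :
    toFlat (X + Y) = toFlat X + toFlat Y := by
  ext ⟨i, x⟩ ⟨j, y⟩; simp [toFlat]

def LB (N J : ℕ) (A₀ M : Rm J) : Matrix (Fin N) (Fin N) (Rm J) :=
  Matrix.of fun i j => if i = j then A₀ else if (i : ℕ) = (j : ℕ) + 1 then -M else 0

noncomputable def LinvB (N J : ℕ) (A₀ M : Rm J) : Matrix (Fin N) (Fin N) (Rm J) :=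
  Matrix.of fun i j =>
    if (j : ℕ) ≤ (i : ℕ) then (A₀⁻¹ * M) ^ ((i : ℕ) - (j : ℕ)) * A₀⁻¹ else 0

noncomputable def CB (N J : ℕ) (A₀ M Z : Rm J) : Matrix (Fin N) (Fin N) (Rm J) :=
  Matrix.of fun i j =>
    if (j : ℕ) = N - 1 then (A₀⁻¹ * M) ^ (i : ℕ) * A₀⁻¹ * Z⁻¹ else 0

def EM (N J : ℕ) (M : Rm J) (ε : ℝ) : Matrix (Fin N) (Fin N) (Rm J) :=
  Matrix.of fun i j => if (i : ℕ) = 0 ∧ (j : ℕ) = N - 1 then ε • M else 0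

lemma LB_row_sum {N J : ℕ} (A₀ M : Rm J) (F : Fin N → Rm J) (i : Fin N) :
    ∑ k, LB N J A₀ M i k * F k
      = A₀ * F i - (if h : (i : ℕ) ≠ 0
          then M * F ⟨(i : ℕ) - 1, lt_of_le_of_lt (Nat.sub_le _ _) i.isLt⟩ else 0) := by
  by_cases h0 : (i : ℕ) = 0
  · rw [dif_neg (by omega), sub_zero]
    have hpt : ∀ k : Fin N, LB N J A₀ M i k * F k = if k = i then A₀ * F k else 0 := by
      intro k
      simp only [LB, Matrix.of_apply]
      by_cases hik : i = k
      · rw [if_pos hik, if_pos hik.symm]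
      · rw [if_neg hik, if_neg (by omega), zero_mul, if_neg (fun h => hik h.symm)]
    rw [Finset.sum_congr rfl fun k _ => hpt k,
      Finset.sum_ite_eq' Finset.univ i (fun k => A₀ * F k), if_pos (Finset.mem_univ i)]
  · set i' : Fin N := ⟨(i : ℕ) - 1, lt_of_le_of_lt (Nat.sub_le _ _) i.isLt⟩ with hi'
    have hii' : (i' : ℕ) = (i : ℕ) - 1 := rfl
    have hne : i ≠ i' := by rw [Fin.ne_iff_vne, hii']; omega
    rw [dif_pos h0]
    have hpt : ∀ k : Fin N, LB N J A₀ M i k * F k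
        = (if k = i then A₀ * F k else 0) + (if k = i' then -(M * F k) else 0) := by
      intro k
      simp only [LB, Matrix.of_apply]
      by_cases h1 : k = i
      · rw [if_pos h1.symm, if_pos h1,
          if_neg (fun h => hne (h1.symm.trans h)), add_zero]
      · rw [if_neg (fun h => h1 h.symm), if_neg h1, zero_add]
        by_cases h2 : k = i'
        · rw [if_pos (show (i : ℕ) = (k : ℕ) + 1 by rw [h2, hii']; omega),
            if_pos h2, neg_mul]
        · have hk2 : (k : ℕ) ≠ (i' : ℕ) := fun h => h2 (Fin.ext h)
          rw [if_neg (show ¬(i : ℕ) = (k : ℕ) + 1 by omega), zero_mul, if_neg h2]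
    rw [Finset.sum_congr rfl fun k _ => hpt k, Finset.sum_add_distrib,
      Finset.sum_ite_eq' Finset.univ i (fun k => A₀ * F k),
      Finset.sum_ite_eq' Finset.univ i' (fun k => -(M * F k)),
      if_pos (Finset.mem_univ i), if_pos (Finset.mem_univ i'), ← sub_eq_add_neg]

lemma LB_col_sum {N J : ℕ} (A₀ M : Rm J) (F : Fin N → Rm J) (j : Fin N) :
    ∑ k, F k * LB N J A₀ M k j
      = F j * A₀ - (if h : (j : ℕ) + 1 < N then F ⟨(j : ℕ) + 1, h⟩ * M else 0) := by
  by_cases h0 : (j : ℕ) + 1 < N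
  · set j' : Fin N := ⟨(j : ℕ) + 1, h0⟩ with hj'
    have hjj' : (j' : ℕ) = (j : ℕ) + 1 := rfl
    have hne : j ≠ j' := by rw [Fin.ne_iff_vne, hjj']; omega
    rw [dif_pos h0]
    have hpt : ∀ k : Fin N, F k * LB N J A₀ M k j
        = (if k = j then F k * A₀ else 0) + (if k = j' then -(F k * M) else 0) := by
      intro k
      simp only [LB, Matrix.of_apply]
      by_cases h1 : k = j
      · rw [if_pos h1, if_pos h1, if_neg (fun h => hne (h1.symm.trans h)), add_zero]
      · rw [if_neg h1, if_neg h1, zero_add]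
        by_cases h2 : k = j'
        · rw [if_pos (show (k : ℕ) = (j : ℕ) + 1 by rw [h2]), if_pos h2, mul_neg]
        · have hk2 : (k : ℕ) ≠ (j' : ℕ) := fun h => h2 (Fin.ext h)
          rw [if_neg (show ¬(k : ℕ) = (j : ℕ) + 1 by omega), mul_zero, if_neg h2]
    rw [Finset.sum_congr rfl fun k _ => hpt k, Finset.sum_add_distrib,
      Finset.sum_ite_eq' Finset.univ j (fun k => F k * A₀),
      Finset.sum_ite_eq' Finset.univ j' (fun k => -(F k * M)),
      if_pos (Finset.mem_univ j), if_pos (Finset.mem_univ j'), ← sub_eq_add_neg]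
  · rw [dif_neg h0, sub_zero]
    have hpt : ∀ k : Fin N, F k * LB N J A₀ M k j = if k = j then F k * A₀ else 0 := by
      intro k
      simp only [LB, Matrix.of_apply]
      by_cases hik : k = j
      · rw [if_pos hik, if_pos hik]
      · rw [if_neg hik,
          if_neg (show ¬(k : ℕ) = (j : ℕ) + 1 by have := k.isLt; omega),
          mul_zero, if_neg hik]
    rw [Finset.sum_congr rfl fun k _ => hpt k,
      Finset.sum_ite_eq' Finset.univ j (fun k => F k * A₀), if_pos (Finset.mem_univ j)]


section Blocks

variable {N J : ℕ} {A₀ M Z : Rm J}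

lemma L_mul_Linv (hAd : IsUnit A₀.det) :
    LB N J A₀ M * LinvB N J A₀ M = 1 := by
  have hAA : A₀ * A₀⁻¹ = 1 := Matrix.mul_nonsing_inv _ hAd
  have hAB : A₀ * (A₀⁻¹ * M) = M := by rw [← Matrix.mul_assoc, hAA, Matrix.one_mul]
  have hABn : ∀ n : ℕ, A₀ * ((A₀⁻¹ * M) ^ (n + 1) * A₀⁻¹)
      = M * ((A₀⁻¹ * M) ^ n * A₀⁻¹) := by
    intro n
    rw [pow_succ', Matrix.mul_assoc (A₀⁻¹ * M), ← Matrix.mul_assoc A₀, hAB]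
  ext i j : 2
  rw [Matrix.mul_apply, LB_row_sum]
  by_cases h0 : (i : ℕ) = 0
  · rw [dif_neg (by omega), sub_zero]
    simp only [LinvB, Matrix.of_apply]
    by_cases hij : i = j
    · have hij' : (i : ℕ) = (j : ℕ) := congrArg Fin.val hij
      rw [if_pos (by omega), show (i : ℕ) - (j : ℕ) = 0 by omega, pow_zero,
        Matrix.one_mul, hAA, hij, Matrix.one_apply_eq]
    · have hij' : (i : ℕ) ≠ (j : ℕ) := fun h => hij (Fin.ext h)
      rw [if_neg (by omega), Matrix.mul_zero, Matrix.one_apply_ne hij]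
  · rw [dif_pos h0]
    set i1 : Fin N := ⟨(i : ℕ) - 1, lt_of_le_of_lt (Nat.sub_le _ _) i.isLt⟩ with hi1
    have hv : (i1 : ℕ) = (i : ℕ) - 1 := rfl
    simp only [LinvB, Matrix.of_apply, hv]
    rcases lt_trichotomy (j : ℕ) (i : ℕ) with hlt | heq | hgt
    · rw [if_pos (by omega), if_pos (by omega),
        show (i : ℕ) - (j : ℕ) = ((i : ℕ) - 1 - (j : ℕ)) + 1 by omega, hABn, sub_self,
        Matrix.one_apply_ne (by rw [Fin.ne_iff_vne]; omega)]
    · rw [if_pos (by omega), if_neg (by omega), Matrix.mul_zero, sub_zero,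
        show (i : ℕ) - (j : ℕ) = 0 by omega, pow_zero, Matrix.one_mul, hAA,
        show i = j from Fin.ext heq.symm, Matrix.one_apply_eq]
    · rw [if_neg (by omega), if_neg (by omega), Matrix.mul_zero, Matrix.mul_zero,
        sub_zero, Matrix.one_apply_ne (by rw [Fin.ne_iff_vne]; omega)]

lemma Linv_mul_L (hAd : IsUnit A₀.det) :
    LinvB N J A₀ M * LB N J A₀ M = 1 := by
  have hA'A : A₀⁻¹ * A₀ = 1 := Matrix.nonsing_inv_mul _ hAd
  ext i j : 2
  rw [Matrix.mul_apply, LB_col_sum]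
  by_cases hh : (j : ℕ) + 1 < N
  · rw [dif_pos hh]
    set j1 : Fin N := ⟨(j : ℕ) + 1, hh⟩ with hj1
    have hv : (j1 : ℕ) = (j : ℕ) + 1 := rfl
    simp only [LinvB, Matrix.of_apply, hv]
    rcases lt_trichotomy (j : ℕ) (i : ℕ) with hlt | heq | hgt
    · rw [if_pos (by omega), if_pos (by omega)]
      have e1 : (A₀⁻¹ * M) ^ ((i : ℕ) - (j : ℕ)) * A₀⁻¹ * A₀
          = (A₀⁻¹ * M) ^ ((i : ℕ) - (j : ℕ)) := by
        rw [Matrix.mul_assoc, hA'A, Matrix.mul_one]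
      have e2 : (A₀⁻¹ * M) ^ ((i : ℕ) - ((j : ℕ) + 1)) * A₀⁻¹ * M
          = (A₀⁻¹ * M) ^ ((i : ℕ) - (j : ℕ)) := by
        rw [Matrix.mul_assoc, ← pow_succ,
          show (i : ℕ) - ((j : ℕ) + 1) + 1 = (i : ℕ) - (j : ℕ) by omega]
      rw [e1, e2, sub_self, Matrix.one_apply_ne (by rw [Fin.ne_iff_vne]; omega)]
    · rw [if_pos (by omega), if_neg (by omega), Matrix.zero_mul, sub_zero,
        show (i : ℕ) - (j : ℕ) = 0 by omega, pow_zero, Matrix.one_mul, hA'A,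
        show i = j from Fin.ext heq.symm, Matrix.one_apply_eq]
    · rw [if_neg (by omega), if_neg (by omega), Matrix.zero_mul, Matrix.zero_mul,
        sub_zero, Matrix.one_apply_ne (by rw [Fin.ne_iff_vne]; omega)]
  · rw [dif_neg hh, sub_zero]
    simp only [LinvB, Matrix.of_apply]
    rcases lt_trichotomy (j : ℕ) (i : ℕ) with hlt | heq | hgt
    · exact absurd i.isLt (by omega)
    · rw [if_pos (by omega), show (i : ℕ) - (j : ℕ) = 0 by omega, pow_zero,
        Matrix.one_mul, hA'A, show i = j from Fin.ext heq.symm, Matrix.one_apply_eq]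
    · rw [if_neg (by omega), Matrix.zero_mul,
        Matrix.one_apply_ne (by rw [Fin.ne_iff_vne]; omega)]

end Blocks
section Block3

variable {N J : ℕ} {A₀ M Z : Rm J}

lemma EM_mul_CB (hN : 0 < N) (ε : ℝ)
    (hMB1 : M * ((A₀⁻¹ * M) ^ (N - 1) * A₀⁻¹) = (M * A₀⁻¹) ^ N) (i j : Fin N) :
    (EM N J M ε * CB N J A₀ M Z) i j
      = if (i : ℕ) = 0 ∧ (j : ℕ) = N - 1
          then ε • ((M * A₀⁻¹) ^ N * Z⁻¹) else 0 := by
  rw [Matrix.mul_apply]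
  set lst : Fin N := ⟨N - 1, Nat.sub_lt hN Nat.one_pos⟩ with hlst
  have hlv : (lst : ℕ) = N - 1 := rfl
  by_cases hi : (i : ℕ) = 0
  · by_cases hj : (j : ℕ) = N - 1
    · rw [if_pos (show (i : ℕ) = 0 ∧ (j : ℕ) = N - 1 from ⟨hi, hj⟩)]
      have hpt : ∀ k : Fin N, EM N J M ε i k * CB N J A₀ M Z k j
          = if k = lst then ε • ((M * A₀⁻¹) ^ N * Z⁻¹) else 0 := by
        intro k
        simp only [EM, CB, Matrix.of_apply]
        by_cases hk : k = lst
        · rw [if_pos (show (i : ℕ) = 0 ∧ (k : ℕ) = N - 1 from ⟨hi, by rw [hk]⟩),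
            if_pos hj, if_pos hk, hk, hlv, Matrix.smul_mul, ← Matrix.mul_assoc M, hMB1]
        · rw [if_neg (show ¬((i : ℕ) = 0 ∧ (k : ℕ) = N - 1) from
              fun h => hk (Fin.ext (h.2.trans hlv.symm))), zero_mul, if_neg hk]
      rw [Finset.sum_congr rfl fun k _ => hpt k,
        Finset.sum_ite_eq' Finset.univ lst _, if_pos (Finset.mem_univ lst)]
    · rw [if_neg (not_and_of_not_right _ hj)]
      have hpt : ∀ k : Fin N, EM N J M ε i k * CB N J A₀ M Z k j = 0 := by
        intro k
        simp only [CB, Matrix.of_apply, if_neg hj, mul_zero]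
      rw [Finset.sum_congr rfl fun k _ => hpt k, Finset.sum_const_zero]
  · rw [if_neg (not_and_of_not_left _ hi)]
    have hpt : ∀ k : Fin N, EM N J M ε i k * CB N J A₀ M Z k j = 0 := by
      intro k
      simp only [EM, Matrix.of_apply]
      rw [if_neg (not_and_of_not_left _ hi), zero_mul]
    rw [Finset.sum_congr rfl fun k _ => hpt k, Finset.sum_const_zero]

lemma P_mul_oneCB (hN : 0 < N) (hAd : IsUnit A₀.det) (ε : ℝ)
    (hMB1 : M * ((A₀⁻¹ * M) ^ (N - 1) * A₀⁻¹) = (M * A₀⁻¹) ^ N)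
    (hWZ : (1 - ε • (M * A₀⁻¹) ^ N) * Z⁻¹ = ε • M) :
    (LB N J A₀ M - EM N J M ε) * (1 + CB N J A₀ M Z) = LB N J A₀ M := by
  have hAA : A₀ * A₀⁻¹ = 1 := Matrix.mul_nonsing_inv _ hAd
  have hAB : A₀ * (A₀⁻¹ * M) = M := by rw [← Matrix.mul_assoc, hAA, Matrix.one_mul]
  have hABn2 : ∀ (n : ℕ) (C : Rm J), A₀ * ((A₀⁻¹ * M) ^ (n + 1) * C)
      = M * ((A₀⁻¹ * M) ^ n * C) := by
    intro n C
    rw [pow_succ', Matrix.mul_assoc (A₀⁻¹ * M), ← Matrix.mul_assoc A₀, hAB]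
  suffices h : (LB N J A₀ M - EM N J M ε) * CB N J A₀ M Z = EM N J M ε by
    rw [mul_add, mul_one, h, sub_add_cancel]
  rw [sub_mul]
  ext i j : 1
  rw [Matrix.sub_apply, EM_mul_CB hN ε hMB1, Matrix.mul_apply, LB_row_sum]
  by_cases hj : (j : ℕ) = N - 1
  · by_cases hi : (i : ℕ) = 0
    · rw [dif_neg (by omega), sub_zero]
      simp only [CB, EM, Matrix.of_apply]
      rw [if_pos (show (i : ℕ) = 0 ∧ (j : ℕ) = N - 1 from ⟨hi, hj⟩), if_pos hj,
        if_pos (show (i : ℕ) = 0 ∧ (j : ℕ) = N - 1 from ⟨hi, hj⟩)]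
      rw [show (A₀⁻¹ * M) ^ (i : ℕ) * A₀⁻¹ * Z⁻¹ = A₀⁻¹ * Z⁻¹ by
          rw [hi, pow_zero, Matrix.one_mul]]
      rw [← Matrix.mul_assoc, hAA, Matrix.one_mul]
      rw [sub_mul, Matrix.one_mul, Matrix.smul_mul] at hWZ
      exact hWZ
    · rw [dif_pos (by omega)]
      rw [if_neg (not_and_of_not_left _ hi)]
      set i1 : Fin N := ⟨(i : ℕ) - 1, lt_of_le_of_lt (Nat.sub_le _ _) i.isLt⟩ with hi1
      have hv : (i1 : ℕ) = (i : ℕ) - 1 := rfl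
      simp only [CB, EM, Matrix.of_apply, hv]
      rw [if_pos hj, if_pos hj, if_neg (not_and_of_not_left _ hi), sub_zero,
        Matrix.mul_assoc ((A₀⁻¹ * M) ^ (i : ℕ)),
        Matrix.mul_assoc ((A₀⁻¹ * M) ^ ((i : ℕ) - 1)),
        show (A₀⁻¹ * M : Rm J) ^ (i : ℕ) = (A₀⁻¹ * M) ^ (((i : ℕ) - 1) + 1) from by
          rw [show ((i : ℕ) - 1) + 1 = (i : ℕ) by omega],
        hABn2, sub_self]
  · simp only [CB, EM, Matrix.of_apply]
    rw [if_neg hj, if_neg hj, if_neg (not_and_of_not_right _ hj),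
      if_neg (not_and_of_not_right _ hj), Matrix.mul_zero, sub_zero, zero_sub, neg_eq_zero]
    split <;> simp

end Block3
section Spectral

variable {J : ℕ} {A₀ M K : Rm J}

lemma posDef_smul (hK : K.PosDef) {c : ℝ} (hc : 0 < c) : (c • K).PosDef := by
  refine Matrix.PosDef.of_dotProduct_mulVec_pos ?_ (fun x hx => ?_)
  · unfold Matrix.IsHermitian
    rw [Matrix.conjTranspose_smul, hK.1.eq, star_trivial]
  · rw [Matrix.smul_mulVec, dotProduct_smul, smul_eq_mul]
    exact mul_pos hc (hK.dotProduct_mulVec_pos hx)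

lemma posDef_conj (hB : IsUnit (Matrix.det (M : Rm J))) (hS : A₀.PosDef) :
    (Mᵀ * A₀ * M).PosDef := by
  have hMH : Mᴴ = Mᵀ := Matrix.conjTranspose_eq_transpose_of_trivial M
  refine Matrix.PosDef.of_dotProduct_mulVec_pos ?_ (fun x hx => ?_)
  · rw [← hMH]
    exact Matrix.isHermitian_conjTranspose_mul_mul M hS.1
  · have hinj : Function.Injective (M.mulVec) := by
      rw [Matrix.mulVec_injective_iff_isUnit]
      exact (Matrix.isUnit_iff_isUnit_det M).2 hB
    have hMx : M *ᵥ x ≠ 0 := by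
      intro h
      exact hx (hinj (by simpa using h))
    rw [← hMH]
    simpa only [star_mulVec, Matrix.dotProduct_mulVec, vecMul_vecMul]
      using hS.dotProduct_mulVec_pos hMx

lemma posSemidef_conj (hS : A₀.PosSemidef) : (Mᵀ * A₀ * M).PosSemidef := by
  have hMH : Mᴴ = Mᵀ := Matrix.conjTranspose_eq_transpose_of_trivial M
  rw [← hMH]
  exact hS.conjTranspose_mul_mul_same M

/-- `M - M A₀⁻¹ M` is positive semidefinite when `M ≤ A₀`. -/
lemma D1_psd (hM : M.PosDef) (hAM : (A₀ - M).PosSemidef) (hAd : IsUnit A₀.det)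
    (hAinv : (A₀⁻¹ : Rm J).IsHermitian) :
    (M - M * A₀⁻¹ * M).PosSemidef := by
  have hMT : Mᵀ = M := by
    rw [← Matrix.conjTranspose_eq_transpose_of_trivial]; exact hM.1.eq
  refine Matrix.PosSemidef.of_dotProduct_mulVec_nonneg ?_ (fun x => ?_)
  · have h2 : (M * A₀⁻¹ * M).IsHermitian := by
      have h := Matrix.isHermitian_conjTranspose_mul_mul M hAinv
      rwa [Matrix.conjTranspose_eq_transpose_of_trivial, hMT] at h
    exact hM.1.sub h2
  · have symmM : ∀ v w : Fin J → ℝ, v ⬝ᵥ (M *ᵥ w) = w ⬝ᵥ (M *ᵥ v) := by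
      intro v w
      rw [Matrix.dotProduct_mulVec, ← Matrix.mulVec_transpose, hMT, dotProduct_comm]
    have e0 : (M * A₀⁻¹ * M) *ᵥ x = M *ᵥ (A₀⁻¹ *ᵥ (M *ᵥ x)) := by
      rw [Matrix.mulVec_mulVec, Matrix.mulVec_mulVec, Matrix.mul_assoc]
    have hAa : A₀ *ᵥ (A₀⁻¹ *ᵥ (M *ᵥ x)) = M *ᵥ x := by
      rw [Matrix.mulVec_mulVec, Matrix.mul_nonsing_inv _ hAd, Matrix.one_mulVec]
    rw [star_trivial, Matrix.sub_mulVec, dotProduct_sub, e0]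
    set a : Fin J → ℝ := A₀⁻¹ *ᵥ (M *ᵥ x) with ha
    have h1 : 0 ≤ (x - a) ⬝ᵥ (M *ᵥ (x - a)) := by
      have := hM.posSemidef.dotProduct_mulVec_nonneg (x - a)
      rwa [star_trivial] at this
    rw [Matrix.mulVec_sub, dotProduct_sub, sub_dotProduct, sub_dotProduct] at h1
    have h2 : 0 ≤ a ⬝ᵥ (A₀ *ᵥ a) - a ⬝ᵥ (M *ᵥ a) := by
      have := hAM.dotProduct_mulVec_nonneg a
      rwa [star_trivial, Matrix.sub_mulVec, dotProduct_sub] at this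
    have h3 : a ⬝ᵥ (A₀ *ᵥ a) = a ⬝ᵥ (M *ᵥ x) := by rw [hAa]
    have h4 : x ⬝ᵥ (M *ᵥ a) = a ⬝ᵥ (M *ᵥ x) := symmM x a
    linarith

lemma unit_det_W (hM : M.PosDef) (hA₀ : A₀.PosDef) (hAM0 : (A₀ - M).PosDef)
    {ε : ℝ} (hε0 : 0 < ε) (hε1 : ε ≤ 1) {N : ℕ} (hN : 0 < N) :
    IsUnit (1 - ε • (A₀⁻¹ * M) ^ N : Rm J).det := by
  have hAd : IsUnit A₀.det := isUnit_iff_ne_zero.2 (ne_of_gt hA₀.det_pos)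
  have hAiH : (A₀⁻¹ : Rm J).IsHermitian := hA₀.inv.1
  have hAiT : (A₀⁻¹)ᵀ = A₀⁻¹ := by
    rw [← Matrix.conjTranspose_eq_transpose_of_trivial]; exact hAiH.eq
  have hMT : Mᵀ = M := by
    rw [← Matrix.conjTranspose_eq_transpose_of_trivial]; exact hM.1.eq
  set B : Rm J := A₀⁻¹ * M with hB
  have hBT : Bᵀ = M * A₀⁻¹ := by rw [hB, Matrix.transpose_mul, hMT, hAiT]
  have hBd : IsUnit B.det := by
    rw [hB, Matrix.det_mul, Matrix.det_nonsing_inv, Ring.inverse_eq_inv]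
    exact isUnit_iff_ne_zero.2
      (mul_ne_zero (inv_ne_zero (ne_of_gt hA₀.det_pos)) (ne_of_gt hM.det_pos))
  have hAB : A₀ * B = M := by
    rw [hB, ← Matrix.mul_assoc, Matrix.mul_nonsing_inv _ hAd, Matrix.one_mul]
  have hS2 : ∀ n : ℕ, A₀ * B ^ (n + 2) = Bᵀ * (A₀ * B ^ n) * B := by
    intro n
    have l : A₀ * B ^ (n + 2) = M * B ^ (n + 1) := by
      rw [pow_succ', ← Matrix.mul_assoc, hAB]
    have r : M * A₀⁻¹ * (A₀ * B ^ n) * B = M * B ^ (n + 1) := by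
      rw [Matrix.mul_assoc M A₀⁻¹, ← Matrix.mul_assoc A₀⁻¹,
        Matrix.nonsing_inv_mul _ hAd, Matrix.one_mul, Matrix.mul_assoc, ← pow_succ]
    rw [hBT, l, r]
  have hSpd : ∀ n : ℕ, (A₀ * B ^ n).PosDef ∧ (A₀ * B ^ (n + 1)).PosDef := by
    intro n
    induction n with
    | zero =>
      refine ⟨?_, ?_⟩
      · rw [pow_zero, Matrix.mul_one]; exact hA₀
      · rw [pow_one, hAB]; exact hM
    | succ n ih =>
      refine ⟨ih.2, ?_⟩
      rw [show n + 1 + 1 = n + 2 from rfl, hS2 n]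
      exact posDef_conj hBd ih.1
  have hDpsd : ∀ n : ℕ, (A₀ * B ^ n - A₀ * B ^ (n + 1)).PosSemidef
      ∧ (A₀ * B ^ (n + 1) - A₀ * B ^ (n + 2)).PosSemidef := by
    intro n
    induction n with
    | zero =>
      refine ⟨?_, ?_⟩
      · rw [pow_zero, Matrix.mul_one, pow_one, hAB]
        exact hAM0.posSemidef
      · have e2 : A₀ * B ^ 2 = M * A₀⁻¹ * M := by
          rw [pow_two, ← Matrix.mul_assoc, hAB, hB, ← Matrix.mul_assoc]
        rw [pow_one, hAB, e2]
        exact D1_psd hM hAM0.posSemidef hAd hAiH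
    | succ n ih =>
      refine ⟨ih.2, ?_⟩
      have e : A₀ * B ^ (n + 2) - A₀ * B ^ (n + 3)
          = Bᵀ * (A₀ * B ^ n - A₀ * B ^ (n + 1)) * B := by
        rw [mul_sub, sub_mul, hS2 n, hS2 (n + 1)]
      rw [show n + 1 + 1 = n + 2 from rfl, show n + 1 + 2 = n + 3 from rfl, e]
      exact posSemidef_conj ih.1
  rw [isUnit_iff_ne_zero]
  intro hdet
  obtain ⟨v, hv, hWv⟩ := Matrix.exists_mulVec_eq_zero_iff.2 hdet
  have hvN : v = ε • (B ^ N *ᵥ v) := by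
    rw [Matrix.sub_mulVec, Matrix.one_mulVec, Matrix.smul_mulVec,
      sub_eq_zero] at hWv
    exact hWv
  set q : ℕ → ℝ := fun n => v ⬝ᵥ ((A₀ * B ^ n) *ᵥ v) with hq
  have hqdef : ∀ n, q n = v ⬝ᵥ ((A₀ * B ^ n) *ᵥ v) := fun n => rfl
  have hq0N : q 0 = ε * q N := by
    have e : (A₀ * B ^ 0) *ᵥ v = ε • ((A₀ * B ^ N) *ᵥ v) := by
      rw [pow_zero, Matrix.mul_one]
      conv_lhs => rw [hvN]
      rw [Matrix.mulVec_smul, Matrix.mulVec_mulVec]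
    rw [hqdef, hqdef, e, dotProduct_smul, smul_eq_mul]
  have hqpos : ∀ n, 0 < q n := by
    intro n
    have := (hSpd n).1.dotProduct_mulVec_pos hv
    rwa [star_trivial] at this
  have hmono : ∀ n, q (n + 1) ≤ q n := by
    intro n
    have := (hDpsd n).1.dotProduct_mulVec_nonneg v
    rw [star_trivial, Matrix.sub_mulVec, dotProduct_sub] at this
    rw [hqdef, hqdef]
    linarith
  have h01 : q 1 < q 0 := by
    have h := hAM0.dotProduct_mulVec_pos hv
    rw [star_trivial, Matrix.sub_mulVec, dotProduct_sub] at h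
    have e0 : q 0 = v ⬝ᵥ (A₀ *ᵥ v) := by rw [hqdef, pow_zero, Matrix.mul_one]
    have e1 : q 1 = v ⬝ᵥ (M *ᵥ v) := by rw [hqdef, pow_one, hAB]
    linarith
  have hchain : ∀ k, q (1 + k) ≤ q 1 := by
    intro k
    induction k with
    | zero => simp
    | succ k ih =>
      have e : 1 + (k + 1) = (1 + k) + 1 := by omega
      rw [e]
      exact le_trans (hmono (1 + k)) ih
  have hN1 : q N ≤ q 1 := by
    have := hchain (N - 1)
    rwa [show 1 + (N - 1) = N by omega] at this
  nlinarith [hqpos N, hq0N, h01, hN1]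

end Spectral
section Glue

variable {N J : ℕ} {A₀ M Z : Rm J}

lemma toFlat_sub (X Y : Matrix (Fin N) (Fin N) (Rm J)) :
    toFlat (X - Y) = toFlat X - toFlat Y := by
  ext ⟨i, x⟩ ⟨j, y⟩; simp [toFlat]

lemma Lmat_flat : Lmat N J A₀ M = toFlat (LB N J A₀ M) := by
  ext ⟨i, x⟩ ⟨j, y⟩
  by_cases h1 : i = j
  · simp [Lmat, LB, toFlat, h1]
  · by_cases h2 : (i : ℕ) = (j : ℕ) + 1 <;> simp [Lmat, LB, toFlat, h1, h2]

lemma E_flat (hN : 0 < N) (M : Rm J) (ε : ℝ) :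
    ε • (Emat N J ⟨0, hN⟩ * M * (Emat N J ⟨N - 1, Nat.sub_lt hN Nat.one_pos⟩)ᵀ)
      = toFlat (EM N J M ε) := by
  have h1 : ∀ (p : Fin N × Fin J) (z : Fin J),
      (Emat N J ⟨0, hN⟩ * M) p z = if p.1 = (⟨0, hN⟩ : Fin N) then M p.2 z else 0 := by
    intro p z
    rw [Matrix.mul_apply]
    by_cases hp : p.1 = (⟨0, hN⟩ : Fin N)
    · rw [if_pos hp]
      have hpt : ∀ w, Emat N J ⟨0, hN⟩ p w * M w z
          = if p.2 = w then M w z else 0 := by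
        intro w
        simp only [Emat, Matrix.of_apply, hp, true_and]
        split <;> simp
      rw [Finset.sum_congr rfl fun w _ => hpt w, Finset.sum_ite_eq Finset.univ p.2,
        if_pos (Finset.mem_univ _)]
    · rw [if_neg hp]
      have hpt : ∀ w, Emat N J ⟨0, hN⟩ p w * M w z = 0 := by
        intro w
        simp only [Emat, Matrix.of_apply]
        rw [if_neg (not_and_of_not_left _ hp), zero_mul]
      rw [Finset.sum_congr rfl fun w _ => hpt w, Finset.sum_const_zero]
  ext ⟨i, x⟩ ⟨j, y⟩
  rw [Matrix.smul_apply, Matrix.mul_apply]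
  simp only [fun z => h1 (i, x) z]
  have h2 : ∀ z : Fin J,
      (if (i, x).1 = (⟨0, hN⟩ : Fin N) then M (i, x).2 z else 0)
        * (Emat N J ⟨N - 1, Nat.sub_lt hN Nat.one_pos⟩)ᵀ z (j, y)
      = if z = y then
          (if i = (⟨0, hN⟩ : Fin N) ∧ j = (⟨N - 1, Nat.sub_lt hN Nat.one_pos⟩ : Fin N)
            then M x z else 0) else 0 := by
    intro z
    simp only [Matrix.transpose_apply, Emat, Matrix.of_apply]
    by_cases hz : z = y
    · subst hz
      by_cases hi : i = (⟨0, hN⟩ : Fin N) <;>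
        by_cases hj : j = (⟨N - 1, Nat.sub_lt hN Nat.one_pos⟩ : Fin N) <;>
        simp [hi, hj]
    · rw [if_neg (show ¬(j = (⟨N - 1, Nat.sub_lt hN Nat.one_pos⟩ : Fin N) ∧ y = z) from
          fun h => hz (h.2.symm)), mul_zero, if_neg hz]
  rw [Finset.sum_congr rfl fun z _ => h2 z, Finset.sum_ite_eq' Finset.univ y,
    if_pos (Finset.mem_univ _)]
  simp only [toFlat, EM, Matrix.of_apply]
  by_cases hi : i = (⟨0, hN⟩ : Fin N) <;>
    by_cases hj : j = (⟨N - 1, Nat.sub_lt hN Nat.one_pos⟩ : Fin N)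
  · rw [if_pos ⟨hi, hj⟩,
      if_pos (show (i : ℕ) = 0 ∧ (j : ℕ) = N - 1 from ⟨by rw [hi], by rw [hj]⟩)]
    simp
  · rw [if_neg (fun h => hj h.2),
      if_neg (show ¬((i : ℕ) = 0 ∧ (j : ℕ) = N - 1) from
        fun h => hj (Fin.ext h.2)), smul_zero, Matrix.zero_apply]
  · rw [if_neg (fun h => hi h.1),
      if_neg (show ¬((i : ℕ) = 0 ∧ (j : ℕ) = N - 1) from
        fun h => hi (Fin.ext h.1)), smul_zero, Matrix.zero_apply]
  · rw [if_neg (fun h => hi h.1),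
      if_neg (show ¬((i : ℕ) = 0 ∧ (j : ℕ) = N - 1) from
        fun h => hi (Fin.ext h.1)), smul_zero, Matrix.zero_apply]

lemma CB_flat (hN : 0 < N) (A₀ M Z : Rm J) :
    toFlat (LinvB N J A₀ M) * Emat N J ⟨0, hN⟩ * Z⁻¹
        * (Emat N J ⟨N - 1, Nat.sub_lt hN Nat.one_pos⟩)ᵀ
      = toFlat (CB N J A₀ M Z) := by
  have h1 : ∀ (p : Fin N × Fin J) (z : Fin J),
      (toFlat (LinvB N J A₀ M) * Emat N J ⟨0, hN⟩) p z
        = ((A₀⁻¹ * M) ^ (p.1 : ℕ) * A₀⁻¹) p.2 z := by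
    intro p z
    rw [Matrix.mul_apply, Fintype.sum_prod_type]
    have hpt : ∀ k : Fin N, (∑ w : Fin J,
        toFlat (LinvB N J A₀ M) p (k, w) * Emat N J ⟨0, hN⟩ (k, w) z)
        = if k = (⟨0, hN⟩ : Fin N) then ((A₀⁻¹ * M) ^ (p.1 : ℕ) * A₀⁻¹) p.2 z else 0 := by
      intro k
      by_cases hk : k = (⟨0, hN⟩ : Fin N)
      · rw [if_pos hk]
        have hin : ∀ w : Fin J, toFlat (LinvB N J A₀ M) p (k, w) * Emat N J ⟨0, hN⟩ (k, w) z
            = if w = z then ((A₀⁻¹ * M) ^ (p.1 : ℕ) * A₀⁻¹) p.2 w else 0 := by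
          intro w
          simp only [toFlat, Emat, LinvB, Matrix.of_apply, hk, true_and]
          rw [if_pos (show ((⟨0, hN⟩ : Fin N) : ℕ) ≤ (p.1 : ℕ) from Nat.zero_le _)]
          have : (p.1 : ℕ) - ((⟨0, hN⟩ : Fin N) : ℕ) = (p.1 : ℕ) := rfl
          rw [this]
          split <;> simp
        rw [Finset.sum_congr rfl fun w _ => hin w, Finset.sum_ite_eq' Finset.univ z,
          if_pos (Finset.mem_univ _)]
      · rw [if_neg hk]
        have hin : ∀ w : Fin J,
            toFlat (LinvB N J A₀ M) p (k, w) * Emat N J ⟨0, hN⟩ (k, w) z = 0 := by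
          intro w
          simp only [Emat, Matrix.of_apply]
          rw [if_neg (not_and_of_not_left _ hk), mul_zero]
        rw [Finset.sum_congr rfl fun w _ => hin w, Finset.sum_const_zero]
    rw [Finset.sum_congr rfl fun k _ => hpt k, Finset.sum_ite_eq' Finset.univ (⟨0, hN⟩ : Fin N),
      if_pos (Finset.mem_univ _)]
  have h2 : ∀ (p : Fin N × Fin J) (z : Fin J),
      (toFlat (LinvB N J A₀ M) * Emat N J ⟨0, hN⟩ * Z⁻¹) p z
        = ((A₀⁻¹ * M) ^ (p.1 : ℕ) * A₀⁻¹ * Z⁻¹) p.2 z := by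
    intro p z
    rw [Matrix.mul_apply, Matrix.mul_apply]
    exact Finset.sum_congr rfl fun w _ => by rw [h1]
  ext ⟨i, x⟩ ⟨j, y⟩
  rw [Matrix.mul_apply]
  have hpt : ∀ z : Fin J,
      (toFlat (LinvB N J A₀ M) * Emat N J ⟨0, hN⟩ * Z⁻¹) (i, x) z
        * (Emat N J ⟨N - 1, Nat.sub_lt hN Nat.one_pos⟩)ᵀ z (j, y)
      = if z = y then
          (if j = (⟨N - 1, Nat.sub_lt hN Nat.one_pos⟩ : Fin N)
            then ((A₀⁻¹ * M) ^ (i : ℕ) * A₀⁻¹ * Z⁻¹) x z else 0) else 0 := by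
    intro z
    rw [h2]
    simp only [Matrix.transpose_apply, Emat, Matrix.of_apply]
    by_cases hz : z = y
    · subst hz
      by_cases hj : j = (⟨N - 1, Nat.sub_lt hN Nat.one_pos⟩ : Fin N) <;> simp [hj]
    · rw [if_neg hz, if_neg (fun h => hz h.2.symm), mul_zero]
  rw [Finset.sum_congr rfl fun z _ => hpt z, Finset.sum_ite_eq' Finset.univ y,
    if_pos (Finset.mem_univ _)]
  simp only [toFlat, CB, Matrix.of_apply]
  by_cases hj : j = (⟨N - 1, Nat.sub_lt hN Nat.one_pos⟩ : Fin N)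
  · rw [if_pos hj, if_pos (show (j : ℕ) = N - 1 from by rw [hj])]
  · rw [if_neg hj, if_neg (show ¬(j : ℕ) = N - 1 from fun h => hj (Fin.ext h))]
    simp

end Glue
end Stmt4

open Stmt4

/-- For every `ε ∈ (0,1]`,
`P_ε⁻¹ L = I_{NJ} + L⁻¹ E₁ Z_ε⁻¹ E_Nᵀ`; blockwise (1-indexed): the `(i,j)`-th
`J × J` block of `P_ε⁻¹ L` equals `I_J` if `i = j < N`, equals
`(A₀⁻¹M)^(i−1) A₀⁻¹ Z_ε⁻¹` if `j = N` and `i < N`, equals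
`I_J + (A₀⁻¹M)^(N−1) A₀⁻¹ Z_ε⁻¹` if `i = j = N`, and `0` otherwise
(here stated with 0-based indices `i, j : Fin N`). -/
theorem statement4 (N J : ℕ) (hN : 0 < N) (hJ : 0 < J) (τ : ℝ) (hτ : 0 < τ)
    (M K : Matrix (Fin J) (Fin J) ℝ) (hM : M.PosDef) (hK : K.PosDef)
    (A₀ : Matrix (Fin J) (Fin J) ℝ) (hA₀ : A₀ = M + τ • K)
    (ε : ℝ) (hε0 : 0 < ε) (hε1 : ε ≤ 1)
    (Zε : Matrix (Fin J) (Fin J) ℝ)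
    (hZε : Zε = ε⁻¹ • ((1 - ε • (A₀⁻¹ * M) ^ N) * M⁻¹)) :
    (Pmat N J hN A₀ M ε)⁻¹ * Lmat N J A₀ M =
      1 + (Lmat N J A₀ M)⁻¹ * Emat N J ⟨0, hN⟩ * Zε⁻¹ *
            (Emat N J ⟨N - 1, Nat.sub_lt hN Nat.one_pos⟩)ᵀ ∧
    ∀ (i j : Fin N) (x y : Fin J),
      (i = j → (i : ℕ) < N - 1 →
        ((Pmat N J hN A₀ M ε)⁻¹ * Lmat N J A₀ M) (i, x) (j, y) =
          (1 : Matrix (Fin J) (Fin J) ℝ) x y) ∧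
      ((j : ℕ) = N - 1 → (i : ℕ) < N - 1 →
        ((Pmat N J hN A₀ M ε)⁻¹ * Lmat N J A₀ M) (i, x) (j, y) =
          ((A₀⁻¹ * M) ^ (i : ℕ) * A₀⁻¹ * Zε⁻¹) x y) ∧
      (i = j → (i : ℕ) = N - 1 →
        ((Pmat N J hN A₀ M ε)⁻¹ * Lmat N J A₀ M) (i, x) (j, y) =
          (1 + (A₀⁻¹ * M) ^ (N - 1) * A₀⁻¹ * Zε⁻¹) x y) ∧
      (i ≠ j → (j : ℕ) ≠ N - 1 →
        ((Pmat N J hN A₀ M ε)⁻¹ * Lmat N J A₀ M) (i, x) (j, y) = 0) := by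
  have hA₀pd : A₀.PosDef := by rw [hA₀]; exact hM.add (posDef_smul hK hτ)
  have hAM0 : (A₀ - M).PosDef := by
    have e : A₀ - M = τ • K := by rw [hA₀, add_sub_cancel_left]
    rw [e]; exact posDef_smul hK hτ
  have hAd : IsUnit A₀.det := isUnit_iff_ne_zero.2 (ne_of_gt hA₀pd.det_pos)
  have hMd : IsUnit M.det := isUnit_iff_ne_zero.2 (ne_of_gt hM.det_pos)
  set W : Matrix (Fin J) (Fin J) ℝ := 1 - ε • (A₀⁻¹ * M) ^ N with hW
  have hWd : IsUnit W.det := unit_det_W hM hA₀pd hAM0 hε0 hε1 hN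
  have hMBn : ∀ n : ℕ, M * (A₀⁻¹ * M) ^ n = (M * A₀⁻¹) ^ n * M := by
    intro n
    induction n with
    | zero => simp
    | succ n ih =>
      rw [pow_succ, ← Matrix.mul_assoc, ih, pow_succ,
        Matrix.mul_assoc ((M * A₀⁻¹) ^ n), Matrix.mul_assoc ((M * A₀⁻¹) ^ n),
        ← Matrix.mul_assoc M A₀⁻¹ M]
  have hMB1 : M * ((A₀⁻¹ * M) ^ (N - 1) * A₀⁻¹) = (M * A₀⁻¹) ^ N := by
    rw [← Matrix.mul_assoc, hMBn (N - 1), Matrix.mul_assoc, ← pow_succ,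
      show N - 1 + 1 = N by omega]
  have hZright : Zε * (ε • (M * W⁻¹)) = 1 := by
    rw [hZε, Matrix.smul_mul, Matrix.mul_smul, smul_smul,
      inv_mul_cancel₀ (ne_of_gt hε0), one_smul,
      Matrix.mul_assoc W M⁻¹ (M * W⁻¹), ← Matrix.mul_assoc M⁻¹ M W⁻¹,
      Matrix.nonsing_inv_mul _ hMd, Matrix.one_mul, Matrix.mul_nonsing_inv _ hWd]
  have hZinv : Zε⁻¹ = ε • (M * W⁻¹) := Matrix.inv_eq_right_inv hZright
  have hWZ : (1 - ε • (M * A₀⁻¹) ^ N) * Zε⁻¹ = ε • M := by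
    have hcomm : (1 - ε • (M * A₀⁻¹) ^ N) * M = M * W := by
      rw [sub_mul, one_mul, hW, mul_sub, mul_one, Matrix.smul_mul, Matrix.mul_smul, hMBn]
    rw [hZinv, Matrix.mul_smul, ← Matrix.mul_assoc, hcomm, Matrix.mul_assoc,
      Matrix.mul_nonsing_inv _ hWd, Matrix.mul_one]
  have hLfl : Lmat N J A₀ M = toFlat (LB N J A₀ M) := Lmat_flat
  have hLL : Lmat N J A₀ M * toFlat (LinvB N J A₀ M) = 1 := by
    rw [hLfl, ← toFlat_mul, L_mul_Linv hAd, toFlat_one]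
  have hLL' : toFlat (LinvB N J A₀ M) * Lmat N J A₀ M = 1 := by
    rw [hLfl, ← toFlat_mul, Linv_mul_L hAd, toFlat_one]
  have hLinv : (Lmat N J A₀ M)⁻¹ = toFlat (LinvB N J A₀ M) := Matrix.inv_eq_right_inv hLL
  have hPfl : Pmat N J hN A₀ M ε = toFlat (LB N J A₀ M - EM N J M ε) := by
    unfold Pmat
    rw [toFlat_sub, ← Lmat_flat, E_flat hN M ε]
  have hMain : (Pmat N J hN A₀ M ε)⁻¹ * Lmat N J A₀ M
      = 1 + toFlat (CB N J A₀ M Zε) := by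
    have h1 : Pmat N J hN A₀ M ε * (1 + toFlat (CB N J A₀ M Zε)) = Lmat N J A₀ M := by
      rw [hPfl, show (1 + toFlat (CB N J A₀ M Zε)) = toFlat (1 + CB N J A₀ M Zε) from by
          rw [toFlat_add, toFlat_one],
        ← toFlat_mul, P_mul_oneCB hN hAd ε hMB1 hWZ, hLfl]
    have h2 : Pmat N J hN A₀ M ε
        * ((1 + toFlat (CB N J A₀ M Zε)) * toFlat (LinvB N J A₀ M)) = 1 := by
      rw [← Matrix.mul_assoc, h1, hLL]
    rw [Matrix.inv_eq_right_inv h2, Matrix.mul_assoc, hLL', Matrix.mul_one]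
  constructor
  · rw [hMain, hLinv, CB_flat hN]
  · intro i j x y
    refine ⟨?_, ?_, ?_, ?_⟩
    · intro hij hlt
      subst hij
      rw [hMain, Matrix.add_apply,
        show toFlat (CB N J A₀ M Zε) (i, x) (i, y) = 0 from by
          simp only [toFlat, CB, Matrix.of_apply]
          rw [if_neg (by omega), Matrix.zero_apply],
        add_zero]
      by_cases hxy : x = y <;> simp [Matrix.one_apply, Prod.ext_iff, hxy]
    · intro hj hi
      rw [hMain, Matrix.add_apply,
        Matrix.one_apply_ne (show ((i, x) : Fin N × Fin J) ≠ (j, y) from by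
          simp only [ne_eq, Prod.mk.injEq, not_and]
          intro h
          exact absurd (congrArg Fin.val h) (by omega)),
        show toFlat (CB N J A₀ M Zε) (i, x) (j, y)
            = ((A₀⁻¹ * M) ^ (i : ℕ) * A₀⁻¹ * Zε⁻¹) x y from by
          simp only [toFlat, CB, Matrix.of_apply]
          rw [if_pos hj],
        zero_add]
    · intro hij hi
      subst hij
      have hCB : toFlat (CB N J A₀ M Zε) (i, x) (i, y)
          = ((A₀⁻¹ * M) ^ (N - 1) * A₀⁻¹ * Zε⁻¹) x y := by
        simp only [toFlat, CB, Matrix.of_apply]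
        rw [if_pos (show (i : ℕ) = N - 1 from hi), hi]
      rw [hMain, Matrix.add_apply, Matrix.add_apply, hCB]
      congr 1
      by_cases hxy : x = y <;> simp [Matrix.one_apply, Prod.ext_iff, hxy]
    · intro hij hj
      rw [hMain, Matrix.add_apply,
        Matrix.one_apply_ne (show ((i, x) : Fin N × Fin J) ≠ (j, y) from by
          simp only [ne_eq, Prod.mk.injEq, not_and]
          exact fun h _ => hij h),
        show toFlat (CB N J A₀ M Zε) (i, x) (j, y) = 0 from by
          simp only [toFlat, CB, Matrix.of_apply]
          rw [if_neg hj, Matrix.zero_apply],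
        add_zero]
end

section
/- For every ε ∈ (0,1], the kernel of P_ε⁻¹L − I_{NJ} has dimension exactly (N−1)J; that is, 1 is an eigenvalue of P_ε⁻¹L of geometric multiplicity (N−1)J. -/
open Matrix

lemma Et_mulVec {N J : ℕ} (i : Fin N) (x : Fin N × Fin J → ℝ) (j : Fin J) :
    ((Emat N J i)ᵀ *ᵥ x) j = x (i, j) := by
  simp only [mulVec, dotProduct, transpose_apply, Emat, Matrix.of_apply]
  rw [Fintype.sum_prod_type]
  rw [Finset.sum_eq_single i]
  · rw [Finset.sum_eq_single j] <;> simp +contextual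
  · intro k _ hk
    simp [hk]
  · simp

lemma E_mulVec {N J : ℕ} (i : Fin N) (y : Fin J → ℝ) (p : Fin N × Fin J) :
    (Emat N J i *ᵥ y) p = if p.1 = i then y p.2 else 0 := by
  simp only [mulVec, dotProduct, Emat, Matrix.of_apply]
  rw [Finset.sum_eq_single p.2]
  · simp
  · intro l _ hl
    simp [Ne.symm hl]
  · simp

lemma L_mulVec {N J : ℕ} (A₀ M : Matrix (Fin J) (Fin J) ℝ) (x : Fin N × Fin J → ℝ)
    (i : Fin N) (j : Fin J) :
    (Lmat N J A₀ M *ᵥ x) (i, j) =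
      (A₀ *ᵥ fun l => x (i, l)) j
      + ∑ k : Fin N, (if (i : ℕ) = (k : ℕ) + 1 then -(M *ᵥ fun l => x (k, l)) j else 0) := by
  simp only [mulVec, dotProduct, Lmat, Matrix.of_apply]
  rw [Fintype.sum_prod_type]
  have hsplit : ∀ k : Fin N,
      (∑ l : Fin J, (if i = k then A₀ j l else if (i : ℕ) = (k : ℕ) + 1 then -M j l else 0) * x (k, l))
      = (if i = k then (A₀ *ᵥ fun l => x (k, l)) j else 0)
        + (if (i : ℕ) = (k : ℕ) + 1 then -(M *ᵥ fun l => x (k, l)) j else 0) := by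
    intro k
    split_ifs with h1 h2
    · omega
    · simp [mulVec, dotProduct]
    · simp [mulVec, dotProduct, Finset.sum_neg_distrib, neg_mul]
    · simp
  simp only [hsplit]
  rw [Finset.sum_add_distrib, Finset.sum_ite_eq]
  simp [mulVec, dotProduct]

lemma L_mulVec_zero {N J : ℕ} (hN : 0 < N) (A₀ M : Matrix (Fin J) (Fin J) ℝ)
    (x : Fin N × Fin J → ℝ) (j : Fin J) :
    (Lmat N J A₀ M *ᵥ x) (⟨0, hN⟩, j) = (A₀ *ᵥ fun l => x (⟨0, hN⟩, l)) j := by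
  rw [L_mulVec]
  rw [Finset.sum_eq_zero (fun k _ => by simp)]
  simp

lemma L_mulVec_succ {N J : ℕ} (A₀ M : Matrix (Fin J) (Fin J) ℝ)
    (x : Fin N × Fin J → ℝ) (i k : Fin N) (hik : (i : ℕ) = (k : ℕ) + 1) (j : Fin J) :
    (Lmat N J A₀ M *ᵥ x) (i, j) =
      (A₀ *ᵥ fun l => x (i, l)) j - (M *ᵥ fun l => x (k, l)) j := by
  rw [L_mulVec]
  rw [Finset.sum_eq_single k]
  · rw [if_pos hik]; ring
  · intro k' _ hk'
    rw [if_neg]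
    intro h
    exact hk' (Fin.ext (by omega))
  · simp

lemma posdef_conj {J : ℕ} {A B : Matrix (Fin J) (Fin J) ℝ} (hA : A.PosDef)
    (hB : Function.Injective B.mulVec) : (Bᵀ * A * B).PosDef := by
  refine PosDef.of_dotProduct_mulVec_pos (by simpa using isHermitian_conjTranspose_mul_mul B hA.1) (fun x hx => ?_)
  have hBx : B *ᵥ x ≠ 0 := fun h => hx (hB (by simpa using h))
  have h := hA.dotProduct_mulVec_pos hBx
  simpa only [star_trivial, Matrix.mul_assoc, ← mulVec_mulVec, dotProduct_mulVec,
    vecMul_transpose] using h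

lemma possemidef_conj {J : ℕ} {A : Matrix (Fin J) (Fin J) ℝ} (hA : A.PosSemidef)
    (B : Matrix (Fin J) (Fin J) ℝ) : (Bᵀ * A * B).PosSemidef := by
  have := hA.conjTranspose_mul_mul_same B
  simpa using this

lemma posdef_smul {J : ℕ} {c : ℝ} (hc : 0 < c) {K : Matrix (Fin J) (Fin J) ℝ}
    (hK : K.PosDef) : (c • K).PosDef := by
  refine PosDef.of_dotProduct_mulVec_pos ?_ (fun x hx => ?_)
  · unfold Matrix.IsHermitian
    rw [conjTranspose_smul, hK.1.eq]
    simp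
  · have := hK.dotProduct_mulVec_pos hx
    simp only [smul_mulVec, dotProduct_smul, smul_eq_mul]
    positivity

section core
variable {J : ℕ} {τ : ℝ} (hτ : 0 < τ)
variable {M K A₀ : Matrix (Fin J) (Fin J) ℝ}
variable (hM : M.PosDef) (hK : K.PosDef) (hA₀ : A₀ = M + τ • K)

include hτ hM hK hA₀

lemma hA_pd : A₀.PosDef := by
  rw [hA₀]; exact hM.add_posSemidef (posdef_smul hτ hK).posSemidef

-- key algebra and kernel lemma
lemma kernel_triv (N : ℕ) (hN : 0 < N) {ε : ℝ} (hε0 : 0 < ε) (hε1 : ε ≤ 1)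
    (v : Fin J → ℝ) (hv : v = ε • ((A₀⁻¹ * M) ^ N *ᵥ v)) : v = 0 := by
  set T := A₀⁻¹ * M with hTdef
  have hA : A₀.PosDef := hA_pd hτ hM hK hA₀
  have hdet : IsUnit A₀.det := (Matrix.isUnit_iff_isUnit_det _).mp hA.isUnit
  have hBA : A₀⁻¹ * A₀ = 1 := Matrix.nonsing_inv_mul _ hdet
  have hMs : Mᵀ = M := by have := hM.1.eq; simpa using this
  have hAs : A₀ᵀ = A₀ := by have := hA.1.eq; simpa using this
  have hTt : Tᵀ = M * A₀⁻¹ := by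
    rw [hTdef, transpose_mul, transpose_nonsing_inv, hAs, hMs]
  have hτK : τ • K = A₀ - M := by rw [hA₀]; abel
  have c1 : M * A₀⁻¹ * A₀ = M := by rw [Matrix.mul_assoc, hBA, Matrix.mul_one]
  have c2 : (M * A₀⁻¹) * (A₀ - M) * (A₀⁻¹ * M) = (M - M * A₀⁻¹ * M) * (A₀⁻¹ * M) := by
    rw [Matrix.mul_sub, c1]
  -- D1
  have hD1eq : Tᵀ * (τ • K) * T = M * T - M * T ^ 2 := by
    rw [hTt, hτK, hTdef, c2]
    noncomm_ring
  have hTinj : Function.Injective T.mulVec :=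
    Matrix.mulVec_injective_iff_isUnit.mpr (hA.inv.isUnit.mul hM.isUnit)
  have hτKpd : (τ • K).PosDef := posdef_smul hτ hK
  have hD1 : (M * T - M * T ^ 2).PosDef := hD1eq ▸ posdef_conj hτKpd hTinj
  -- D0
  have hD0eq : (1 - T)ᵀ * M * (1 - T) + Tᵀ * (τ • K) * T = M - M * T := by
    rw [hTt, hτK, hTdef, c2, transpose_sub, transpose_one, hTt]
    noncomm_ring
  have hD0 : (M - M * T).PosDef := by
    rw [← hD0eq]
    exact Matrix.PosDef.posSemidef_add (possemidef_conj hM.posSemidef (1 - T))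
      (posdef_conj hτKpd hTinj)
  -- conjugation step
  have hMTsymm : ∀ n : ℕ, Tᵀ * (M * T ^ n) = M * T ^ (n + 1) := by
    intro n
    rw [hTt, hTdef]
    calc M * A₀⁻¹ * (M * (A₀⁻¹ * M) ^ n) = M * ((A₀⁻¹ * M) * (A₀⁻¹ * M) ^ n) := by
          noncomm_ring
      _ = M * (A₀⁻¹ * M) ^ (n + 1) := by rw [← pow_succ']
  have hconj : ∀ n : ℕ, Tᵀ * (M * T ^ n) * T = M * T ^ (n + 2) := by
    intro n
    rw [hMTsymm n, Matrix.mul_assoc, ← pow_succ]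
  -- all D_n posdef
  have hD : ∀ n : ℕ, (M * T ^ n - M * T ^ (n + 1)).PosDef := by
    have key : ∀ n : ℕ, (M * T ^ n - M * T ^ (n + 1)).PosDef ∧
        (M * T ^ (n + 1) - M * T ^ (n + 2)).PosDef := by
      intro n
      induction n with
      | zero => exact ⟨by simpa using hD0, by simpa [pow_one] using hD1⟩
      | succ m ih =>
        refine ⟨ih.2, ?_⟩
        have h := posdef_conj ih.1 hTinj
        have : Tᵀ * (M * T ^ m - M * T ^ (m + 1)) * T
            = M * T ^ (m + 2) - M * T ^ (m + 3) := by
          rw [Matrix.mul_sub, Matrix.sub_mul, hconj m, hconj (m + 1)]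
        rw [this] at h
        exact h
    exact fun n => (key n).1
  -- G_n posdef
  have hG : ∀ n : ℕ, (M - M * T ^ (n + 1)).PosDef := by
    intro n
    induction n with
    | zero => simpa using hD0
    | succ m ih =>
      have := ih.add (hD (m + 1))
      rwa [sub_add_sub_cancel] at this
  -- final contradiction
  by_contra hvne
  have ha : 0 < v ⬝ᵥ (M *ᵥ v) := by simpa using hM.dotProduct_mulVec_pos hvne
  have hab : v ⬝ᵥ (M *ᵥ v) = ε * (v ⬝ᵥ ((M * T ^ N) *ᵥ v)) := by
    calc v ⬝ᵥ (M *ᵥ v) = v ⬝ᵥ (M *ᵥ (ε • (T ^ N *ᵥ v))) := by rw [← hv]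
      _ = ε * (v ⬝ᵥ (M *ᵥ (T ^ N *ᵥ v))) := by
          rw [mulVec_smul, dotProduct_smul, smul_eq_mul]
      _ = ε * (v ⬝ᵥ ((M * T ^ N) *ᵥ v)) := by rw [mulVec_mulVec]
  obtain ⟨n, rfl⟩ : ∃ n, N = n + 1 := ⟨N - 1, by omega⟩
  have hc : 0 < v ⬝ᵥ ((M - M * T ^ (n + 1)) *ᵥ v) := by simpa using (hG n).dotProduct_mulVec_pos hvne
  rw [sub_mulVec, dotProduct_sub] at hc
  nlinarith [hc, ha, hab, hε0, hε1]

end core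

/-- For every `ε ∈ (0,1]`, the kernel of `P_ε⁻¹ L − I_{NJ}`
has dimension exactly `(N−1)J`: i.e. `1` is an eigenvalue of `P_ε⁻¹ L` of
geometric multiplicity `(N−1)J`. -/
theorem statement6 (N J : ℕ) (hN : 0 < N) (hJ : 0 < J) (τ : ℝ) (hτ : 0 < τ)
    (M K : Matrix (Fin J) (Fin J) ℝ) (hM : M.PosDef) (hK : K.PosDef)
    (A₀ : Matrix (Fin J) (Fin J) ℝ) (hA₀ : A₀ = M + τ • K)
    (ε : ℝ) (hε0 : 0 < ε) (hε1 : ε ≤ 1) :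
    Module.finrank ℝ
      (LinearMap.ker ((Pmat N J hN A₀ M ε)⁻¹ * Lmat N J A₀ M - 1).mulVecLin) =
      (N - 1) * J := by
  set i0 : Fin N := ⟨0, hN⟩ with hi0
  set iN : Fin N := ⟨N - 1, Nat.sub_lt hN Nat.one_pos⟩ with hiN
  set E0 := Emat N J i0
  set EN := Emat N J iN
  set L := Lmat N J A₀ M with hL
  set P := Pmat N J hN A₀ M ε with hP
  set X := E0 * M * ENᵀ with hX
  set T := A₀⁻¹ * M with hT
  have hA : A₀.PosDef := hA_pd hτ hM hK hA₀
  have hAdet : IsUnit A₀.det := (Matrix.isUnit_iff_isUnit_det _).mp hA.isUnit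
  have hBA : A₀⁻¹ * A₀ = 1 := Matrix.nonsing_inv_mul _ hAdet
  have hMinj : Function.Injective M.mulVec :=
    Matrix.mulVec_injective_iff_isUnit.mpr hM.isUnit
  have hεne : ε ≠ 0 := ne_of_gt hε0
  -- mulVec of X
  have hXmv : ∀ x : Fin N × Fin J → ℝ,
      X *ᵥ x = E0 *ᵥ (M *ᵥ (ENᵀ *ᵥ x)) := by
    intro x
    rw [hX, ← mulVec_mulVec, ← mulVec_mulVec]
  -- Step A : P is invertible
  have keyinj : ∀ x : Fin N × Fin J → ℝ, P *ᵥ x = 0 → x = 0 := by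
    intro x hx
    set u : Fin N → Fin J → ℝ := fun k l => x (k, l) with hu
    have hENx : ENᵀ *ᵥ x = u iN := funext fun j => Et_mulVec iN x j
    have hLx : L *ᵥ x = ε • (E0 *ᵥ (M *ᵥ u iN)) := by
      have h1 : P *ᵥ x = L *ᵥ x - ε • (X *ᵥ x) := by
        rw [hP, hX]
        unfold Pmat
        rw [sub_mulVec, smul_mulVec]
      rw [hx] at h1
      have := (sub_eq_zero.mp h1.symm)
      rw [this, hXmv, hENx]
    -- block equations
    have eqsucc : ∀ i k : Fin N, (i : ℕ) = (k : ℕ) + 1 → A₀ *ᵥ u i = M *ᵥ u k := by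
      intro i k hik
      funext j
      have h1 := congrFun hLx (i, j)
      rw [L_mulVec_succ A₀ M x i k hik j] at h1
      have hne : i ≠ i0 := by
        intro h
        rw [h] at hik
        simp [hi0] at hik
      rw [Pi.smul_apply, E_mulVec, if_neg hne, smul_zero] at h1
      exact sub_eq_zero.mp h1
    have eq0 : A₀ *ᵥ u i0 = ε • (M *ᵥ u iN) := by
      funext j
      have h1 := congrFun hLx (i0, j)
      rw [show ((i0, j) : Fin N × Fin J) = (⟨0, hN⟩, j) from rfl] at h1
      rw [L_mulVec_zero hN A₀ M x j] at h1
      rw [Pi.smul_apply, E_mulVec, if_pos rfl] at h1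
      exact h1
    -- turn into T-recursions
    have hinv : ∀ w z : Fin J → ℝ, A₀ *ᵥ w = z → w = A₀⁻¹ *ᵥ z := by
      intro w z hwz
      rw [← hwz, mulVec_mulVec, hBA, one_mulVec]
    have recsucc : ∀ i k : Fin N, (i : ℕ) = (k : ℕ) + 1 → u i = T *ᵥ u k := by
      intro i k hik
      rw [hT, ← mulVec_mulVec]
      exact hinv _ _ (eqsucc i k hik)
    have rec0 : u i0 = ε • (T *ᵥ u iN) := by
      have := hinv _ _ eq0
      rw [this, mulVec_smul, mulVec_mulVec]
    have pows : ∀ m (hm : m < N), u ⟨m, hm⟩ = T ^ m *ᵥ u i0 := by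
      intro m
      induction m with
      | zero => intro hm; rw [pow_zero, one_mulVec]
      | succ n ih =>
        intro hm
        have hn : n < N := by omega
        have h1 : u ⟨n + 1, hm⟩ = T *ᵥ u ⟨n, hn⟩ := recsucc _ _ (by simp)
        rw [h1, ih hn, mulVec_mulVec, ← pow_succ']
    have hNi : u iN = T ^ (N - 1) *ᵥ u i0 := pows (N - 1) (Nat.sub_lt hN Nat.one_pos)
    have hfix : u i0 = ε • (T ^ N *ᵥ u i0) := by
      conv_lhs => rw [rec0, hNi]
      rw [mulVec_mulVec, ← pow_succ', Nat.sub_add_cancel hN]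
    have h0 : u i0 = 0 := kernel_triv hτ hM hK hA₀ N hN hε0 hε1 _ hfix
    funext p
    have := pows p.1 p.1.isLt
    rw [Fin.eta] at this
    have hup : u p.1 = 0 := by rw [this, h0, mulVec_zero]
    have := congrFun hup p.2
    simpa [hu] using this
  have hPinj : Function.Injective P.mulVec := by
    rw [← Matrix.coe_mulVecLin]
    exact LinearMap.ker_eq_bot.mp (LinearMap.ker_eq_bot'.mpr
      (fun x hx => keyinj x (by simpa using hx)))
  have hPunit : IsUnit P := Matrix.mulVec_injective_iff_isUnit.mp hPinj
  have hPdet : IsUnit P.det := (Matrix.isUnit_iff_isUnit_det _).mp hPunit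
  -- Step B : the matrix identity
  have hmat : P⁻¹ * L - 1 = ε • (P⁻¹ * X) := by
    calc P⁻¹ * L - 1 = P⁻¹ * L - P⁻¹ * P := by rw [Matrix.nonsing_inv_mul _ hPdet]
      _ = P⁻¹ * (L - P) := by rw [Matrix.mul_sub]
      _ = P⁻¹ * (ε • X) := by
          congr 1
          rw [hP, hL, hX]
          unfold Pmat
          rw [sub_sub_cancel]
      _ = ε • (P⁻¹ * X) := by rw [Matrix.mul_smul]
  -- Step C : kernel identification
  have hPinvinj : Function.Injective (P⁻¹).mulVec :=
    Matrix.mulVec_injective_iff_isUnit.mpr (Matrix.isUnit_nonsing_inv_iff.mpr hPunit)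
  have hker : LinearMap.ker (P⁻¹ * L - 1).mulVecLin
      = LinearMap.ker (ENᵀ).mulVecLin := by
    ext x
    simp only [LinearMap.mem_ker, mulVecLin_apply]
    constructor
    · intro h
      rw [hmat, smul_mulVec, smul_eq_zero] at h
      rcases h with h | h
      · exfalso; exact hεne h
      rw [← mulVec_mulVec] at h
      have h2 : X *ᵥ x = 0 := hPinvinj (by simpa using h)
      rw [hXmv] at h2
      have h3 : M *ᵥ (ENᵀ *ᵥ x) = 0 := by
        funext j
        have := congrFun h2 (i0, j)
        rw [E_mulVec, if_pos rfl] at this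
        exact this
      exact hMinj (by simpa using h3)
    · intro h
      rw [hmat, smul_mulVec, ← mulVec_mulVec, hXmv, h, mulVec_zero, mulVec_zero,
        mulVec_zero, smul_zero]
  rw [hker]
  -- Step D : finrank computation
  have hsurj : Function.Surjective (ENᵀ).mulVecLin := by
    intro b
    refine ⟨fun p => if p.1 = iN then b p.2 else 0, ?_⟩
    funext j
    rw [mulVecLin_apply, Et_mulVec]
    simp
  have hrn := LinearMap.finrank_range_add_finrank_ker (ENᵀ).mulVecLin
  rw [LinearMap.range_eq_top.mpr hsurj, finrank_top] at hrn
  rw [Module.finrank_fintype_fun_eq_card, Module.finrank_fintype_fun_eq_card,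
    Fintype.card_prod, Fintype.card_fin, Fintype.card_fin] at hrn
  obtain ⟨n, rfl⟩ : ∃ n, N = n + 1 := ⟨N - 1, by omega⟩
  rw [Nat.succ_mul] at hrn
  simp only [Nat.add_sub_cancel]
  generalize n * J = m at hrn ⊢
  omega
end

section
/- For every ε ∈ (0,1], the spectrum of I_J + ε((M⁻¹A₀)^N − εI_J)⁻¹ equals the set {λ^N/(λ^N − ε) : λ an eigenvalue of M^{−1/2}A₀M^{−1/2}}; moreover every eigenvalue λ of M^{−1/2}A₀M^{−1/2} is real with λ > 1, so this spectrum is contained in the real open interval (1, +∞). -/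
open Matrix

/-- The square root of a positive semidefinite matrix, as `Matrix.PosSemidef.sqrt` was defined
in Mathlib of December 2024 (since removed). -/
noncomputable def Matrix.PosSemidef.sqrt {n 𝕜 : Type*} [Fintype n] [RCLike 𝕜] [PartialOrder 𝕜]
    [DecidableEq n]
    {A : Matrix n n 𝕜} (hA : A.PosSemidef) : Matrix n n 𝕜 :=
  (hA.1.eigenvectorUnitary : Matrix n n 𝕜) * diagonal ((↑) ∘ (√·) ∘ hA.1.eigenvalues) *
    (star hA.1.eigenvectorUnitary : Matrix n n 𝕜)

private lemma conj_pow_aux {n R : Type*} [Fintype n] [DecidableEq n] [CommRing R]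
    (P X Q : Matrix n n R) (hPQ : P * Q = 1) (hQP : Q * P = 1) (k : ℕ) :
    (P * X * Q) ^ k = P * X ^ k * Q := by
  induction k with
  | zero => simpa using hPQ.symm
  | succ k ih =>
      have h : P * X ^ k * Q * (P * X * Q) = P * (X ^ k * ((Q * P) * (X * Q))) := by
        simp only [mul_assoc]
      rw [pow_succ, ih, h, hQP, one_mul, pow_succ]
      simp only [mul_assoc]

private lemma conj_inv_aux {n R : Type*} [Fintype n] [DecidableEq n] [CommRing R]
    (P X Y Q : Matrix n n R) (hPQ : P * Q = 1) (hQP : Q * P = 1) (hXY : X * Y = 1) :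
    (P * X * Q)⁻¹ = P * Y * Q := by
  apply Matrix.inv_eq_right_inv
  have h : P * X * Q * (P * Y * Q) = P * (X * ((Q * P) * (Y * Q))) := by
    simp only [mul_assoc]
  rw [h, hQP, one_mul, ← mul_assoc X Y Q, hXY, one_mul, hPQ]

private lemma map_mul_aux {n : Type*} [Fintype n] (A B : Matrix n n ℝ) :
    (A * B).map Complex.ofReal = A.map Complex.ofReal * B.map Complex.ofReal :=
  Matrix.map_mul (f := Complex.ofRealHom)

private lemma map_one_aux {n : Type*} [Fintype n] [DecidableEq n] :
    (1 : Matrix n n ℝ).map Complex.ofReal = 1 :=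
  Matrix.map_one Complex.ofReal Complex.ofReal_zero Complex.ofReal_one

private lemma spectrum_conj_map_aux {n : Type*} [Fintype n] [DecidableEq n]
    (P X Q : Matrix n n ℝ) (hPQ : P * Q = 1) (hQP : Q * P = 1) :
    spectrum ℂ ((P * X * Q).map Complex.ofReal) = spectrum ℂ (X.map Complex.ofReal) := by
  let u : (Matrix n n ℂ)ˣ :=
    ⟨P.map Complex.ofReal, Q.map Complex.ofReal,
      by rw [← map_mul_aux, hPQ, map_one_aux],
      by rw [← map_mul_aux, hQP, map_one_aux]⟩
  have h : (P * X * Q).map Complex.ofReal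
      = (u : Matrix n n ℂ) * X.map Complex.ofReal * ((u⁻¹ : (Matrix n n ℂ)ˣ) : Matrix n n ℂ) := by
    simp only [u, Units.inv_mk, map_mul_aux]
  rw [h, spectrum.units_conjugate]

private lemma posDef_conj_aux {n : Type*} [Fintype n] [DecidableEq n]
    {X : Matrix n n ℝ} (hX : X.PosDef) (P : Matrix n n ℝ) (hP : IsUnit P.det) :
    (Pᴴ * X * P).PosDef := by
  refine Matrix.PosDef.of_dotProduct_mulVec_pos (Matrix.isHermitian_conjTranspose_mul_mul P hX.isHermitian) (fun x hx => ?_)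
  have hPx : P *ᵥ x ≠ 0 := by
    have hinj := Matrix.mulVec_injective_iff_isUnit.mpr ((Matrix.isUnit_iff_isUnit_det P).mpr hP)
    intro h
    exact hx (hinj (by simpa using h))
  simpa only [star_mulVec, dotProduct_mulVec, vecMul_vecMul] using hX.dotProduct_mulVec_pos hPx

private lemma posDef_smul_aux {n : Type*} [Fintype n]
    {X : Matrix n n ℝ} (hX : X.PosDef) {c : ℝ} (hc : 0 < c) : (c • X).PosDef := by
  refine Matrix.PosDef.of_dotProduct_mulVec_pos ?_ (fun x hx => ?_)
  · have : (c • X)ᴴ = c • Xᴴ := by simp [Matrix.conjTranspose_smul]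
    rw [Matrix.IsHermitian, this, hX.isHermitian.eq]
  · rw [smul_mulVec, dotProduct_smul, smul_eq_mul]
    exact mul_pos hc (hX.dotProduct_mulVec_pos hx)

/-- For every `ε ∈ (0,1]`, the spectrum (over `ℂ`) of
`I_J + ε ((M⁻¹A₀)^N − ε I_J)⁻¹` equals
`{λ^N/(λ^N − ε) : λ ∈ σ(M^{−1/2} A₀ M^{−1/2})}`; moreover every eigenvalue `λ`
of `M^{−1/2} A₀ M^{−1/2}` is real with `λ > 1`, so this spectrum is contained
in the real open interval `(1, +∞)`.  Here `M^{1/2}` is the (unique) symmetric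
positive definite square root of `M` and `M^{−1/2} = (M^{1/2})⁻¹`. -/
theorem statement8 (J N : ℕ) (hJ : 0 < J) (hN : 0 < N) (τ : ℝ) (hτ : 0 < τ)
    (M K : Matrix (Fin J) (Fin J) ℝ) (hM : M.PosDef) (hK : K.PosDef)
    (A₀ : Matrix (Fin J) (Fin J) ℝ) (hA₀ : A₀ = M + τ • K)
    (ε : ℝ) (hε0 : 0 < ε) (hε1 : ε ≤ 1)
    (S : Matrix (Fin J) (Fin J) ℝ)
    (hS : S = (Matrix.PosSemidef.sqrt hM.posSemidef)⁻¹ * A₀ * (Matrix.PosSemidef.sqrt hM.posSemidef)⁻¹)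
    (G : Matrix (Fin J) (Fin J) ℝ)
    (hG : G = 1 + ε • ((M⁻¹ * A₀) ^ N - ε • (1 : Matrix (Fin J) (Fin J) ℝ))⁻¹) :
    (∀ lam ∈ spectrum ℂ (S.map Complex.ofReal), lam.im = 0 ∧ 1 < lam.re) ∧
    spectrum ℂ (G.map Complex.ofReal) =
      {μ : ℂ | ∃ lam ∈ spectrum ℂ (S.map Complex.ofReal),
        μ = lam ^ N / (lam ^ N - (ε : ℂ))} ∧
    (∀ μ ∈ spectrum ℂ (G.map Complex.ofReal), μ.im = 0 ∧ 1 < μ.re) := by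
  classical
  set B : Matrix (Fin J) (Fin J) ℝ := Matrix.PosSemidef.sqrt hM.posSemidef with hBdef
  have hBsd : B.PosSemidef := by
    have hd : (diagonal ((↑) ∘ (√·) ∘ hM.posSemidef.1.eigenvalues : Fin J → ℝ)).PosSemidef :=
      PosSemidef.diagonal (fun i => Real.sqrt_nonneg _)
    have := hd.mul_mul_conjTranspose_same (hM.posSemidef.1.eigenvectorUnitary : Matrix (Fin J) (Fin J) ℝ)
    rw [hBdef, Matrix.PosSemidef.sqrt, Matrix.star_eq_conjTranspose]
    exact this
  have hBB : B * B = M := by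
    have hU := Matrix.mem_unitaryGroup_iff'.mp hM.posSemidef.1.eigenvectorUnitary.2
    have hsp := hM.posSemidef.1.spectral_theorem
    have hev := hM.posSemidef.eigenvalues_nonneg
    rw [hBdef, Matrix.PosSemidef.sqrt]
    conv_rhs => rw [hsp]
    simp only [Unitary.conjStarAlgAut_apply]
    rw [show ∀ X Y Z W V : Matrix (Fin J) (Fin J) ℝ, X * Y * Z * (X * W * V) = X * (Y * (Z * X) * W) * V by
      intros; simp only [mul_assoc], hU, mul_one, diagonal_mul_diagonal]
    congr 2
    ext i j
    by_cases hij : i = j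
    · subst hij; simp [Real.mul_self_sqrt (hev i)]
    · simp [diagonal_apply_ne _ hij]
  have hdetB : IsUnit B.det := by
    have h2 : B.det * B.det = M.det := by rw [← Matrix.det_mul, hBB]
    have hne : B.det ≠ 0 := by
      intro h
      rw [h, mul_zero] at h2
      exact hM.det_pos.ne' h2.symm
    exact hne.isUnit
  have hB1 : B⁻¹ * B = 1 := Matrix.nonsing_inv_mul B hdetB
  have hB2 : B * B⁻¹ = 1 := Matrix.mul_nonsing_inv B hdetB
  have hBiH : (B⁻¹)ᴴ = B⁻¹ := by
    rw [Matrix.conjTranspose_nonsing_inv, hBsd.isHermitian.eq]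
  -- `C := B⁻¹ K B⁻¹` is positive definite
  have hC : (B⁻¹ * K * B⁻¹).PosDef := by
    have := posDef_conj_aux hK (B⁻¹) (B.isUnit_nonsing_inv_det hdetB)
    rwa [hBiH] at this
  -- `S = 1 + τ • C`
  have hS1 : S = 1 + τ • (B⁻¹ * K * B⁻¹) := by
    have hone : B⁻¹ * M * B⁻¹ = 1 := by
      rw [← hBB, show B⁻¹ * (B * B) * B⁻¹ = (B⁻¹ * B) * (B * B⁻¹) by
        simp only [mul_assoc], hB1, hB2, one_mul]
    rw [hS, hA₀, Matrix.mul_add, Matrix.add_mul, hone, Matrix.mul_smul, Matrix.smul_mul]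
  have hSsub : (S - 1).PosDef := by
    have h : S - 1 = τ • (B⁻¹ * K * B⁻¹) := by rw [hS1, add_sub_cancel_left]
    rw [h]
    exact posDef_smul_aux hC hτ
  have hSH : S.IsHermitian := by
    have h : S = 1 + (S - 1) := by abel
    rw [h]
    exact Matrix.isHermitian_one.add hSsub.isHermitian
  set lam : Fin J → ℝ := hSH.eigenvalues with hlamdef
  -- eigenvalues are `> 1`
  have hlam : ∀ i, 1 < lam i := by
    intro i
    set v : Fin J → ℝ := ⇑(hSH.eigenvectorBasis i) with hv
    have hv0 : v ≠ 0 := fun h => hSH.eigenvectorBasis.orthonormal.ne_zero i (by ext j; simpa using congrFun h j)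
    have hvv : 0 < star v ⬝ᵥ v := Matrix.dotProduct_star_self_pos_iff.mpr hv0
    have hmv : S *ᵥ v = lam i • v := hSH.mulVec_eigenvectorBasis i
    have hpos := hSsub.dotProduct_mulVec_pos hv0
    rw [Matrix.sub_mulVec, hmv, Matrix.one_mulVec,
      show lam i • v - v = (lam i - 1) • v by rw [sub_smul, one_smul],
      dotProduct_smul, smul_eq_mul] at hpos
    nlinarith
  -- spectral decomposition
  set U : Matrix (Fin J) (Fin J) ℝ := (hSH.eigenvectorUnitary : Matrix (Fin J) (Fin J) ℝ)
    with hUdef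
  have hU1 : U * star U = 1 := Matrix.mem_unitaryGroup_iff.mp hSH.eigenvectorUnitary.2
  have hU2 : star U * U = 1 := Matrix.mem_unitaryGroup_iff'.mp hSH.eigenvectorUnitary.2
  have hSpecS : S = U * Matrix.diagonal lam * star U := by
    have h := hSH.spectral_theorem
    rw [show RCLike.ofReal ∘ hSH.eigenvalues = lam by
      rw [RCLike.ofReal_real_eq_id]; rfl] at h
    exact h
  have hdiagmap : ∀ d : Fin J → ℝ, (Matrix.diagonal d).map Complex.ofReal
      = Matrix.diagonal (fun i => (d i : ℂ)) :=
    fun d => Matrix.diagonal_map Complex.ofReal_zero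
  have hspecS : spectrum ℂ (S.map Complex.ofReal) = Set.range (fun i => ((lam i : ℝ) : ℂ)) := by
    rw [hSpecS, spectrum_conj_map_aux U _ (star U) hU1 hU2, hdiagmap, spectrum_diagonal]
  -- the conjugating pair for `G`
  set P : Matrix (Fin J) (Fin J) ℝ := B⁻¹ * U with hPdef
  set Q : Matrix (Fin J) (Fin J) ℝ := star U * B with hQdef
  have hPQ : P * Q = 1 := by
    have h : B⁻¹ * U * (star U * B) = B⁻¹ * ((U * star U) * B) := by simp only [mul_assoc]
    rw [hPdef, hQdef, h, hU1, one_mul, hB1]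
  have hQP : Q * P = 1 := by
    have h : star U * B * (B⁻¹ * U) = star U * ((B * B⁻¹) * U) := by simp only [mul_assoc]
    rw [hQdef, hPdef, h, hB2, one_mul, hU2]
  have hassoc : ∀ Z : Matrix (Fin J) (Fin J) ℝ, B⁻¹ * (U * Z * star U) * B = P * Z * Q := by
    intro Z
    rw [hPdef, hQdef]
    simp only [mul_assoc]
  have hMA : M⁻¹ * A₀ = B⁻¹ * S * B := by
    have hMinv : M⁻¹ = B⁻¹ * B⁻¹ := by rw [← hBB, Matrix.mul_inv_rev]
    rw [hS, hMinv, show B⁻¹ * (B⁻¹ * A₀ * B⁻¹) * B = B⁻¹ * B⁻¹ * (A₀ * (B⁻¹ * B)) by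
      simp only [mul_assoc], hB1, mul_one, mul_assoc]
  have hdlam : ∀ i, (0:ℝ) < lam i ^ N - ε := by
    intro i
    have h1 : (1:ℝ) < lam i ^ N := one_lt_pow₀ (hlam i) hN.ne'
    linarith
  -- conjugate form of G
  have e1 : (M⁻¹ * A₀) ^ N = P * Matrix.diagonal (fun i => lam i ^ N) * Q := by
    rw [hMA, conj_pow_aux _ _ _ hB1 hB2, hSpecS, conj_pow_aux _ _ _ hU1 hU2,
      Matrix.diagonal_pow, hassoc]
    rfl
  have e2 : (M⁻¹ * A₀) ^ N - ε • (1 : Matrix (Fin J) (Fin J) ℝ)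
      = P * Matrix.diagonal (fun i => lam i ^ N - ε) * Q := by
    have hsm : (ε • (1 : Matrix (Fin J) (Fin J) ℝ)) = P * (ε • 1) * Q := by
      rw [Matrix.mul_smul, mul_one, Matrix.smul_mul, hPQ]
    rw [e1, hsm, ← Matrix.sub_mul, ← Matrix.mul_sub, Matrix.smul_one_eq_diagonal,
      Matrix.diagonal_sub]
  have hinv : ((M⁻¹ * A₀) ^ N - ε • (1 : Matrix (Fin J) (Fin J) ℝ))⁻¹
      = P * Matrix.diagonal (fun i => (lam i ^ N - ε)⁻¹) * Q := by
    rw [e2]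
    refine conj_inv_aux P _ _ Q hPQ hQP ?_
    rw [Matrix.diagonal_mul_diagonal,
      show (fun i => (lam i ^ N - ε) * (lam i ^ N - ε)⁻¹) = fun _ => (1:ℝ) from
        funext fun i => mul_inv_cancel₀ (hdlam i).ne', Matrix.diagonal_one]
  have hGconj : G = P * Matrix.diagonal (fun i => 1 + ε * (lam i ^ N - ε)⁻¹) * Q := by
    have h1 : (1 : Matrix (Fin J) (Fin J) ℝ) = P * 1 * Q := by rw [mul_one, hPQ]
    have h2 : ε • (P * Matrix.diagonal (fun i => (lam i ^ N - ε)⁻¹) * Q)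
        = P * (ε • Matrix.diagonal (fun i => (lam i ^ N - ε)⁻¹)) * Q := by
      rw [← Matrix.smul_mul, ← Matrix.mul_smul]
    have h3 : (1 : Matrix (Fin J) (Fin J) ℝ)
        + ε • Matrix.diagonal (fun i => (lam i ^ N - ε)⁻¹)
        = Matrix.diagonal (fun i => 1 + ε * (lam i ^ N - ε)⁻¹) := by
      rw [← Matrix.diagonal_one, ← Matrix.diagonal_smul, Matrix.diagonal_add]
      rfl
    rw [hG, hinv, h2, h1, ← Matrix.add_mul, ← Matrix.mul_add, h3]
  have hspecG : spectrum ℂ (G.map Complex.ofReal)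
      = Set.range (fun i => ((1 + ε * (lam i ^ N - ε)⁻¹ : ℝ) : ℂ)) := by
    rw [hGconj, spectrum_conj_map_aux P _ Q hPQ hQP, hdiagmap, spectrum_diagonal]
  -- key scalar identity
  have key : ∀ i, ((1 + ε * (lam i ^ N - ε)⁻¹ : ℝ) : ℂ)
      = ((lam i : ℂ)) ^ N / ((lam i : ℂ) ^ N - (ε : ℂ)) := by
    intro i
    have h0 : (lam i : ℝ) ^ N - ε ≠ 0 := (hdlam i).ne'
    have h0' : ((lam i : ℂ)) ^ N - (ε : ℂ) ≠ 0 := by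
      have h := Complex.ofReal_ne_zero.mpr h0
      push_cast at h
      exact h
    rw [eq_div_iff h0']
    push_cast
    field_simp
    ring
  refine ⟨?_, ?_, ?_⟩
  · intro l hl
    rw [hspecS] at hl
    obtain ⟨i, rfl⟩ := hl
    exact ⟨Complex.ofReal_im _, by simpa using hlam i⟩
  · rw [hspecG, hspecS]
    ext μ
    constructor
    · rintro ⟨i, rfl⟩
      exact ⟨(lam i : ℂ), ⟨i, rfl⟩, key i⟩
    · rintro ⟨l, ⟨i, rfl⟩, rfl⟩
      exact ⟨i, key i⟩
  · intro μ hμ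
    rw [hspecG] at hμ
    obtain ⟨i, rfl⟩ := hμ
    refine ⟨Complex.ofReal_im _, ?_⟩
    have h : 0 < ε * (lam i ^ N - ε)⁻¹ := mul_pos hε0 (inv_pos.mpr (hdlam i))
    rw [Complex.ofReal_re]
    linarith
end
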